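/- arXiv:1502.02623 — 6 statements merged into one kernel-verified Lean document; each statement's English description precedes it below -/
import Mathlib

section
/- No finite projective plane is magic over the real numbers. More precisely, let Π = (P, 𝓛) be a finite projective plane and let f : P → ℝ be a function such that there exists c ∈ ℝ with ∑_{x ∈ L} f(x) = c for every line L ∈ 𝓛. Then f is a constant function; in particular, f is not injective. -/
open Configuration

/-- The sum of `v` over the points of the line `l`. -/
noncomputable def lineSum {P L G : Type*} [Membership P L] [AddCommMonoid G]
    (v : P → G) (l : L) : G :=
  ∑ᶠ x ∈ {x : P | x ∈ l}, v x

/-- `v : P → G` is line invariant if its sum along every line of `L` is the same. -/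
def LineInvariant (P L : Type*) {G : Type*} [Membership P L] [AddCommMonoid G]
    (v : P → G) : Prop :=
  ∀ l l' : L, lineSum v l = lineSum v l'

/-- No finite projective plane is magic over the reals: any function `f : P → ℝ` whose sum
along every line equals a common constant `c` is constant, and in particular not injective. -/
theorem stmt_0 {P L : Type*} [Membership P L] [Fintype P] [Fintype L]
    [ProjectivePlane P L] (f : P → ℝ) (c : ℝ)
    (hf : ∀ l : L, lineSum f l = c) :
    (∀ a b : P, f a = f b) ∧ ¬ Function.Injective f := by
  classical
  set n : ℕ := ProjectivePlane.order P L with hn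
  have hls : ∀ l : L, lineSum f l = ∑ x : P, if x ∈ l then f x else 0 := by
    intro l
    rw [lineSum, finsum_mem_eq_toFinset_sum, ← Finset.sum_filter]
    congr 1
    ext x
    simp [Set.mem_toFinset]
  have hS : ∀ a : P, ((n : ℝ) + 1) * c = (n : ℝ) * f a + ∑ x, f x := by
    intro a
    set A : Finset L := Finset.univ.filter (fun l : L => a ∈ l) with hA
    have hcardA : A.card = n + 1 := by
      have h1 : Fintype.card {l : L // a ∈ l} = A.card := Fintype.card_subtype _
      have h2 : lineCount L a = n + 1 := ProjectivePlane.lineCount_eq L a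
      rw [lineCount, Nat.card_eq_fintype_card, h1] at h2
      exact h2
    have hleft : ∑ l ∈ A, lineSum f l = ((n : ℝ) + 1) * c := by
      rw [Finset.sum_congr rfl fun l _ => hf l, Finset.sum_const, hcardA,
        nsmul_eq_mul]
      push_cast
      ring
    have hswap : ∑ l ∈ A, lineSum f l
        = ∑ x : P, ((A.filter (fun l => x ∈ l)).card : ℝ) * f x := by
      simp_rw [hls, Finset.sum_comm (s := A)]
      congr 1
      ext x
      rw [← Finset.sum_filter, Finset.sum_const, nsmul_eq_mul]
    have hcard_eq : ∀ x : P, x ≠ a → (A.filter (fun l => x ∈ l)).card = 1 := by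
      intro x hx
      rw [Finset.card_eq_one]
      refine ⟨HasLines.mkLine (P := P) (L := L) hx.symm, ?_⟩
      ext l
      simp only [Finset.mem_filter, hA, Finset.mem_univ, true_and, Finset.mem_singleton]
      constructor
      · rintro ⟨hal, hxl⟩
        have := HasLines.mkLine_ax (P := P) (L := L) hx.symm
        exact (Nondegenerate.eq_or_eq hal hxl this.1 this.2).resolve_left (Ne.symm hx)
      · rintro rfl
        have := HasLines.mkLine_ax (P := P) (L := L) hx.symm
        exact ⟨this.1, this.2⟩
    have hcard_a : (A.filter (fun l => a ∈ l)).card = n + 1 := by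
      rw [Finset.filter_true_of_mem, hcardA]
      intro l hl
      simpa [hA] using hl
    have hsplit : ∑ x : P, ((A.filter (fun l => x ∈ l)).card : ℝ) * f x
        = ((n : ℝ) + 1) * f a + ∑ x ∈ Finset.univ.erase a, f x := by
      rw [← Finset.add_sum_erase _ _ (Finset.mem_univ a), hcard_a]
      push_cast
      congr 1
      refine Finset.sum_congr rfl fun x hx => ?_
      rw [hcard_eq x (Finset.ne_of_mem_erase hx), Nat.cast_one, one_mul]
    have herase : ∑ x ∈ Finset.univ.erase a, f x = (∑ x, f x) - f a := by
      rw [eq_sub_iff_add_eq, Finset.sum_erase_add _ _ (Finset.mem_univ a)]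
    rw [← hleft, hswap, hsplit, herase]
    ring
  have hnpos : (n : ℝ) ≠ 0 := by
    have := ProjectivePlane.one_lt_order P L
    positivity
  have hconst : ∀ a b : P, f a = f b := by
    intro a b
    have h1 := hS a
    have h2 := hS b
    have : (n : ℝ) * f a = (n : ℝ) * f b := by linarith
    exact mul_left_cancel₀ hnpos this
  refine ⟨hconst, fun hinj => ?_⟩
  obtain ⟨p₁, p₂, p₃, l₁, l₂, l₃, -, -, -, -, h₂₃, -, -, h₃₃⟩ :=
    ProjectivePlane.exists_config (P := P) (L := L)
  have hpp : p₂ = p₃ := hinj (hconst p₂ p₃)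
  exact h₃₃ (hpp ▸ h₂₃)
end

section
/- Let G be a torsion-free abelian group and let Π = (P, 𝓛) be a finite projective plane. Then every line-invariant function v : P → G is constant; in particular, Π is not pseudomagic over G. -/
open Configuration

open Finset in
open scoped Classical in
lemma lineSum_eq {P L G : Type*} [Membership P L] [Fintype P] [AddCommMonoid G]
    (v : P → G) (l : L) :
    lineSum v l = ∑ x ∈ {x : P | x ∈ l}.toFinset, v x :=
  finsum_mem_eq_toFinset_sum v _

open Finset in
open scoped Classical in
lemma key_sum {P L G : Type*} [Membership P L] [Fintype P] [Fintype L]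
    [ProjectivePlane P L] [AddCommGroup G] (v : P → G) (a : P) :
    ∑ l ∈ univ.filter (fun l : L => a ∈ l), lineSum v l
      = lineCount L a • v a + ∑ x ∈ univ.erase a, v x := by
  have hbu : (univ.filter (fun l : L => a ∈ l)).biUnion
      (fun l => ({x : P | x ∈ l}.toFinset).erase a) = univ.erase a := by
    ext x
    simp only [mem_biUnion, mem_erase, mem_filter, mem_univ, true_and, Set.mem_toFinset,
      Set.mem_setOf_eq, and_true]
    constructor
    · rintro ⟨l, _, hx, _⟩; exact hx
    · intro hx
      have hax : a ≠ x := fun h => hx (h.symm)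
      exact ⟨HasLines.mkLine hax, (HasLines.mkLine_ax hax).1, hx, (HasLines.mkLine_ax hax).2⟩
  have hdisj : (↑(univ.filter (fun l : L => a ∈ l)) : Set L).PairwiseDisjoint
      (fun l => ({x : P | x ∈ l}.toFinset).erase a) := by
    intro l₁ h₁ l₂ h₂ hne
    simp only [coe_filter, Set.mem_setOf_eq, mem_univ, true_and] at h₁ h₂
    refine Finset.disjoint_left.mpr fun x hx₁ hx₂ => ?_
    simp only [mem_erase, Set.mem_toFinset, Set.mem_setOf_eq] at hx₁ hx₂
    exact hne ((Nondegenerate.eq_or_eq hx₁.2 h₁ hx₂.2 h₂).resolve_left hx₁.1)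
  calc ∑ l ∈ univ.filter (fun l : L => a ∈ l), lineSum v l
      = ∑ l ∈ univ.filter (fun l : L => a ∈ l),
          (v a + ∑ x ∈ ({x : P | x ∈ l}.toFinset).erase a, v x) := by
        refine Finset.sum_congr rfl fun l hl => ?_
        rw [lineSum_eq]
        rw [mem_filter] at hl
        rw [← Finset.add_sum_erase _ _ (by simpa using hl.2)]
    _ = (univ.filter (fun l : L => a ∈ l)).card • v a
          + ∑ l ∈ univ.filter (fun l : L => a ∈ l),
              ∑ x ∈ ({x : P | x ∈ l}.toFinset).erase a, v x := by
        rw [Finset.sum_add_distrib, Finset.sum_const]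
    _ = lineCount L a • v a + ∑ x ∈ univ.erase a, v x := by
        rw [← Finset.sum_biUnion hdisj, hbu, lineCount, Nat.card_eq_fintype_card,
          Fintype.card_subtype]

/-- If `G` is a torsion-free abelian group, then every line-invariant function on a finite
projective plane with values in `G` is constant; in particular the plane is not pseudomagic
over `G`. -/
theorem stmt_1 {P L G : Type*} [Membership P L] [Fintype P] [Fintype L]
    [ProjectivePlane P L] [AddCommGroup G]
    (htf : ∀ g : G, g ≠ 0 → ¬IsOfFinAddOrder g) :
    (∀ v : P → G, LineInvariant P L v → ∀ a b : P, v a = v b) ∧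
      ¬ ∃ v : P → G, LineInvariant P L v ∧ ¬ ∀ a b : P, v a = v b := by
  classical
  have main : ∀ v : P → G, LineInvariant P L v → ∀ a b : P, v a = v b := by
    intro v hv a b
    obtain ⟨p₁, p₂, p₃, l₀, -⟩ := ProjectivePlane.exists_config (P := P) (L := L)
    set c := lineSum v l₀ with hc
    have hsum : ∀ a : P,
        lineCount L a • c = lineCount L a • v a + ∑ x ∈ Finset.univ.erase a, v x := by
      intro a
      rw [← key_sum v a]
      rw [Finset.sum_congr rfl fun l _ => hv l l₀, Finset.sum_const,
        show (Finset.univ.filter (fun l : L => a ∈ l)).card = lineCount L a by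
          rw [lineCount, Nat.card_eq_fintype_card, Fintype.card_subtype]]
    have hT : ∀ a : P, lineCount L a • v a + ∑ x ∈ Finset.univ.erase a, v x
        = lineCount L a • v a - v a + ∑ x : P, v x := by
      intro a
      rw [← Finset.add_sum_erase _ v (Finset.mem_univ a)]
      abel
    have hcount : lineCount L a = lineCount L b := ProjectivePlane.lineCount_eq_lineCount L a b
    have h1 := (hsum a).trans (hT a)
    have h2 := (hsum b).trans (hT b)
    rw [hcount] at h1
    have h3 : lineCount L b • v a - v a = lineCount L b • v b - v b := by
      have := h1.symm.trans h2
      exact add_right_cancel this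
    have hn : lineCount L b = ProjectivePlane.order P L + 1 := ProjectivePlane.lineCount_eq L b
    rw [hn, succ_nsmul, succ_nsmul, add_sub_cancel_right, add_sub_cancel_right] at h3
    by_contra hab
    have hx : v a - v b ≠ 0 := sub_ne_zero.mpr hab
    refine htf _ hx ?_
    have hord : ProjectivePlane.order P L • (v a - v b) = 0 := by
      rw [smul_sub, h3, sub_self]
    have hpos : 0 < ProjectivePlane.order P L :=
      lt_trans one_pos (ProjectivePlane.one_lt_order P L)
    exact isOfFinAddOrder_iff_nsmul_eq_zero.mpr ⟨_, hpos, hord⟩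
  exact ⟨main, fun ⟨v, hv, hne⟩ => hne (main v hv)⟩
end

section
/- Let Π = (P, 𝓛) be a finite projective plane of order n and let m ≥ 1 be a natural number with gcd(n, m) > 1. Then Π is pseudomagic over ℤ/mℤ, i.e., there exists a non-constant line-invariant function v : P → ℤ/mℤ. -/
open Configuration

/-- If `gcd(n, m) > 1` then a projective plane of order `n` is pseudomagic over `ℤ/mℤ`:
there is a non-constant line-invariant function `v : P → ZMod m`. -/
theorem stmt_3 {P L : Type*} [Membership P L] [Fintype P] [Fintype L]
    [ProjectivePlane P L] {n : ℕ} (hn : ProjectivePlane.order P L = n)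
    (m : ℕ) (hm : 1 ≤ m) (hgcd : 1 < Nat.gcd n m) :
    ∃ v : P → ZMod m, LineInvariant P L v ∧ ¬ ∀ a b : P, v a = v b := by
  classical
  haveI : NeZero m := ⟨by omega⟩
  set d := Nat.gcd n m with hd
  have hdn : d ∣ n := Nat.gcd_dvd_left n m
  have hdm : d ∣ m := Nat.gcd_dvd_right n m
  set c : ZMod m := ((m / d : ℕ) : ZMod m) with hc
  have hmd_pos : 0 < m / d := Nat.div_pos (Nat.le_of_dvd (by omega) hdm) (by omega)
  have hmd_lt : m / d < m := Nat.div_lt_self (by omega) hgcd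
  have hc0 : c ≠ 0 := by
    rw [hc, Ne, ZMod.natCast_eq_zero_iff]
    intro h
    exact absurd (Nat.le_of_dvd hmd_pos h) (by omega)
  have hnc : n • c = 0 := by
    rw [hc, nsmul_eq_mul, ← Nat.cast_mul, ZMod.natCast_eq_zero_iff]
    obtain ⟨k, hk⟩ := hdn
    refine ⟨k, ?_⟩
    rw [hk, mul_comm d k, mul_assoc, Nat.mul_div_cancel' hdm, mul_comm]
  -- get a line and points
  obtain ⟨p₁, p₂, p₃, l₁, l₂, l₃, h₁₂, h₁₃, h₂₁, h₂₂, h₂₃, h₃₁, h₃₂, h₃₃⟩ :=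
    ProjectivePlane.exists_config (P := P) (L := L)
  set l0 : L := l₂ with hl0
  set v : P → ZMod m := fun x => if x ∈ l0 then c else 0 with hv
  have key : ∀ l : L, lineSum v l =
      (Finset.univ.filter (fun x : P => x ∈ l ∧ x ∈ l0)).card • c := by
    intro l
    have : {x : P | x ∈ l} = ↑(Finset.univ.filter (fun x : P => x ∈ l)) := by
      ext x; simp
    rw [lineSum, this, finsum_mem_coe_finset]
    rw [hv]
    rw [← Finset.sum_filter, Finset.filter_filter, Finset.sum_const]
  have hcard_ne : ∀ l : L, l ≠ l0 →
      (Finset.univ.filter (fun x : P => x ∈ l ∧ x ∈ l0)).card = 1 := by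
    intro l hl
    rw [Finset.card_eq_one]
    refine ⟨HasPoints.mkPoint hl, ?_⟩
    ext x
    simp only [Finset.mem_filter, Finset.mem_univ, true_and, Finset.mem_singleton]
    constructor
    · rintro ⟨hx1, hx2⟩
      exact (Nondegenerate.eq_or_eq hx1 (HasPoints.mkPoint_ax hl).1 hx2
        (HasPoints.mkPoint_ax hl).2).resolve_right hl
    · rintro rfl
      exact HasPoints.mkPoint_ax hl
  have hcard_eq : (Finset.univ.filter (fun x : P => x ∈ l0 ∧ x ∈ l0)).card = n + 1 := by
    have : (Finset.univ.filter (fun x : P => x ∈ l0 ∧ x ∈ l0)) =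
        (Finset.univ.filter (fun x : P => x ∈ l0)) := by
      ext x; simp
    rw [this]
    have hpc := ProjectivePlane.pointCount_eq P l0
    rw [hn] at hpc
    rw [← hpc, pointCount, Nat.card_eq_fintype_card, Fintype.card_subtype]
  have hsum : ∀ l : L, lineSum v l = c := by
    intro l
    by_cases hl : l = l0
    · subst hl
      rw [key, hcard_eq, add_smul, hnc, one_smul, zero_add]
    · rw [key, hcard_ne l hl, one_smul]
  refine ⟨v, fun l l' => (hsum l).trans (hsum l').symm, fun h => ?_⟩
  have := h p₂ p₁
  rw [hv] at this
  simp only [if_pos h₂₂, if_neg h₁₂] at this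
  exact hc0 this
end

section
/- Let Π = (P, 𝓛) be a finite projective plane of order n and let m ≥ 1 be a natural number. Then Π is pseudomagic over ℤ/mℤ (i.e., there exists a non-constant line-invariant function v : P → ℤ/mℤ) if and only if gcd(n, m) ≠ 1. -/
open Configuration

open Finset in
private lemma lineSum_eq_sum_filter {P L G : Type*} [Membership P L] [Fintype P]
    [AddCommMonoid G] (v : P → G) (l : L) [DecidablePred (· ∈ l)] :
    lineSum v l = ∑ x ∈ univ.filter (· ∈ l), v x := by
  rw [lineSum, ← finsum_mem_coe_finset]
  congr 1
  ext x
  simp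

open Finset in
private lemma card_points_on_line {P L : Type*} [Membership P L] [Fintype P] [Fintype L]
    [ProjectivePlane P L] (l : L) [DecidablePred (· ∈ l)] :
    (univ.filter (· ∈ l)).card = ProjectivePlane.order P L + 1 := by
  rw [← Fintype.card_subtype, ← Nat.card_eq_fintype_card]
  exact ProjectivePlane.pointCount_eq P l

open Finset in
private lemma card_lines_through_point {P L : Type*} [Membership P L] [Fintype P] [Fintype L]
    [ProjectivePlane P L] (p : P) [DecidablePred (fun l : L => p ∈ l)] :
    (univ.filter (fun l : L => p ∈ l)).card = ProjectivePlane.order P L + 1 := by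
  rw [← Fintype.card_subtype, ← Nat.card_eq_fintype_card]
  exact ProjectivePlane.lineCount_eq L p

open Finset in
/-- Key identity: for any line-invariant `v` in a ring and any point `a`,
`n • v a + ∑ v = (n+1) • s` where `s` is the common line sum. -/
private lemma key_identity {P L : Type*} [Membership P L] [Fintype P] [Fintype L]
    [ProjectivePlane P L] {G : Type*} [CommRing G] (v : P → G)
    (hv : LineInvariant P L v) (l₀ : L) (a : P) :
    (ProjectivePlane.order P L : G) * v a + ∑ x, v x
      = ((ProjectivePlane.order P L : G) + 1) * lineSum v l₀ := by
  classical
  set n := ProjectivePlane.order P L with hn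
  -- sum of line sums over lines through `a`
  have h1 : ∑ l ∈ univ.filter (fun l : L => a ∈ l), lineSum v l
      = ((n : G) + 1) * lineSum v l₀ := by
    rw [Finset.sum_congr rfl (fun l _ => hv l l₀), Finset.sum_const,
      card_lines_through_point a, nsmul_eq_mul]
    push_cast
    ring
  have h2 : ∑ l ∈ univ.filter (fun l : L => a ∈ l), lineSum v l
      = (n : G) * v a + ∑ x, v x := by
    have swap : ∑ l ∈ univ.filter (fun l : L => a ∈ l), lineSum v l
        = ∑ x : P, ((univ.filter (fun l : L => a ∈ l)).filter (fun l => x ∈ l)).card • v x := by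
      have : ∀ l : L, lineSum v l = ∑ x : P, if x ∈ l then v x else 0 := by
        intro l
        rw [lineSum_eq_sum_filter, Finset.sum_filter]
      rw [Finset.sum_congr rfl (fun l _ => this l), Finset.sum_comm]
      refine Finset.sum_congr rfl fun x _ => ?_
      rw [← Finset.sum_filter, Finset.sum_const]
    rw [swap]
    have hcard : ∀ x : P, x ≠ a →
        ((univ.filter (fun l : L => a ∈ l)).filter (fun l => x ∈ l)).card = 1 := by
      intro x hx
      rw [Finset.card_eq_one]
      obtain ⟨l, hl, hul⟩ := HasLines.existsUnique_line P L a x (Ne.symm hx)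
      refine ⟨l, ?_⟩
      ext l'
      simp only [Finset.mem_filter, Finset.mem_univ, true_and, Finset.mem_singleton]
      constructor
      · rintro ⟨h1, h2⟩; exact hul l' ⟨h1, h2⟩
      · rintro rfl; exact ⟨hl.1, hl.2⟩
    have hcarda : ((univ.filter (fun l : L => a ∈ l)).filter (fun l => a ∈ l)).card = n + 1 := by
      rw [Finset.filter_filter]
      simpa using card_lines_through_point (L := L) a
    rw [← Finset.add_sum_erase _ _ (Finset.mem_univ a), hcarda]
    have : ∑ x ∈ univ.erase a,
        ((univ.filter (fun l : L => a ∈ l)).filter (fun l => x ∈ l)).card • v x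
        = ∑ x ∈ univ.erase a, v x := by
      refine Finset.sum_congr rfl fun x hx => ?_
      rw [hcard x (Finset.ne_of_mem_erase hx), one_smul]
    rw [this, ← Finset.add_sum_erase _ v (Finset.mem_univ a), nsmul_eq_mul]
    push_cast
    ring
  rw [← h1, h2]

/-- A projective plane of order `n` is pseudomagic over `ℤ/mℤ` iff `gcd(n, m) ≠ 1`. -/
theorem stmt_4 {P L : Type*} [Membership P L] [Fintype P] [Fintype L]
    [ProjectivePlane P L] {n : ℕ} (hn : ProjectivePlane.order P L = n)
    (m : ℕ) (hm : 1 ≤ m) :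
    (∃ v : P → ZMod m, LineInvariant P L v ∧ ¬ ∀ a b : P, v a = v b) ↔ Nat.gcd n m ≠ 1 := by
  classical
  obtain ⟨p₁, p₂, p₃, l₁, l₂, l₃, -, -, -, -, -, -, -, -⟩ :=
    @ProjectivePlane.exists_config P L _ _
  constructor
  · -- pseudomagic → gcd ≠ 1
    rintro ⟨v, hv, hnc⟩ hgcd
    refine hnc fun a b => ?_
    have ha := key_identity v hv l₁ a
    have hb := key_identity v hv l₁ b
    rw [hn] at ha hb
    have h : (n : ZMod m) * v a = (n : ZMod m) * v b := by
      have := ha.trans hb.symm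
      linear_combination this
    have hu : IsUnit (n : ZMod m) := by
      rw [ZMod.isUnit_iff_coprime]
      exact hgcd
    exact hu.mul_left_cancel h
  · -- gcd ≠ 1 → pseudomagic
    intro hgcd
    set d := Nat.gcd n m with hd
    have hdm : d ∣ m := Nat.gcd_dvd_right n m
    have hdn : d ∣ n := Nat.gcd_dvd_left n m
    have hd2 : 2 ≤ d := by
      rcases Nat.lt_or_ge d 2 with h | h
      · interval_cases d
        · omega
        · exact absurd rfl hgcd
      · exact h
    set t := m / d with ht
    have htpos : 0 < t := Nat.div_pos (Nat.le_of_dvd (by omega) hdm) (by omega)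
    have htlt : t < m := Nat.div_lt_self (by omega) (by omega)
    -- the function: t on l₁, 0 off l₁
    refine ⟨fun x => if x ∈ l₁ then (t : ZMod m) else 0, ?_, ?_⟩
    · -- line invariance: every line sum is t
      have hnt : ((n : ZMod m)) * (t : ZMod m) = 0 := by
        rw [← Nat.cast_mul, ZMod.natCast_eq_zero_iff]
        obtain ⟨k, hk⟩ := hdn
        obtain ⟨j, hj⟩ := hdm
        refine ⟨k, ?_⟩
        have htj : t = j := by
          rw [ht, hj, Nat.mul_div_cancel_left j (by omega : 0 < d)]
        calc n * t = d * k * j := by rw [hk, htj]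
          _ = m * k := by rw [hj]; ring
      have hsum : ∀ l : L, lineSum (fun x => if x ∈ l₁ then (t : ZMod m) else 0) l
          = (t : ZMod m) := by
        intro l
        rw [lineSum_eq_sum_filter]
        rw [← Finset.sum_filter, Finset.sum_const, Finset.filter_filter]
        by_cases hl : l = l₁
        · subst hl
          have : (Finset.univ.filter (fun x : P => x ∈ l ∧ x ∈ l)).card
              = ProjectivePlane.order P L + 1 := by
            simpa [and_self] using card_points_on_line (P := P) l
          rw [this, hn, nsmul_eq_mul]
          push_cast
          linear_combination hnt
        · have : (Finset.univ.filter (fun x : P => x ∈ l ∧ x ∈ l₁)).card = 1 := by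
            rw [Finset.card_eq_one]
            obtain ⟨p, hp, hup⟩ := HasPoints.existsUnique_point P L l l₁ hl
            refine ⟨p, ?_⟩
            ext x
            simp only [Finset.mem_filter, Finset.mem_univ, true_and, Finset.mem_singleton]
            exact ⟨fun h => hup x h, fun h => h ▸ hp⟩
          rw [this, one_smul]
      intro l l'
      rw [hsum l, hsum l']
    · -- non-constant
      intro hcon
      -- a point on l₁
      have : Nonempty {x : P // x ∈ l₁} := by
        rw [← Fintype.card_pos_iff]
        have := ProjectivePlane.pointCount_eq P l₁
        rw [pointCount, Nat.card_eq_fintype_card] at this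
        omega
      obtain ⟨p, hp⟩ := this
      obtain ⟨q, hq⟩ := Nondegenerate.exists_point (P := P) l₁
      have := hcon p q
      simp only [hp, hq, if_pos, if_neg, if_true, if_false] at this
      rw [ZMod.natCast_eq_zero_iff] at this
      have := Nat.le_of_dvd htpos this
      omega
end

section
/- No finite projective plane is magic over any finite cyclic group: if Π = (P, 𝓛) is a finite projective plane of order n and m ≥ 1 is a natural number, then there is no injective line-invariant function v : P → ℤ/mℤ. -/
open Configuration

open Finset in
open scoped Classical in
/-- Double counting: summing the line sums over all lines through `p`. -/
lemma sum_lines_through {P L G : Type*} [Membership P L] [Fintype P] [Fintype L]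
    [ProjectivePlane P L] [AddCommMonoid G] (v : P → G) (p : P) :
    ∑ l ∈ univ.filter (fun l : L => p ∈ l), lineSum v l
      = (∑ x, v x) + (lineCount L p - 1) • v p := by
  classical
  have hline : ∀ l : L, lineSum v l = ∑ x ∈ univ.filter (fun x : P => x ∈ l), v x := by
    intro l
    rw [lineSum, ← finsum_mem_coe_finset]
    congr 1
    ext x; simp
  calc ∑ l ∈ univ.filter (fun l : L => p ∈ l), lineSum v l
      = ∑ l : L, ∑ x : P, if p ∈ l ∧ x ∈ l then v x else 0 := by
        rw [sum_filter]
        refine Finset.sum_congr rfl fun l _ => ?_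
        rw [hline, sum_filter]
        by_cases hp : p ∈ l <;> simp [hp]
    _ = ∑ x : P, (univ.filter (fun l : L => p ∈ l ∧ x ∈ l)).card • v x := by
        rw [Finset.sum_comm]
        refine Finset.sum_congr rfl fun x _ => ?_
        rw [← sum_filter, Finset.sum_const]
    _ = ∑ x : P, (v x + if x = p then (lineCount L p - 1) • v p else 0) := by
        refine Finset.sum_congr rfl fun x _ => ?_
        by_cases hx : x = p
        · subst hx
          have hcard : (univ.filter (fun l : L => x ∈ l ∧ x ∈ l)).card = lineCount L x := by
            rw [lineCount, Nat.card_eq_fintype_card, Fintype.card_subtype]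
            congr 1; ext l; simp
          have h1 : 1 ≤ lineCount L x := by
            rw [ProjectivePlane.lineCount_eq (L := L) x]; omega
          rw [hcard, if_pos rfl]
          conv_lhs => rw [← Nat.sub_add_cancel h1]
          rw [add_smul, one_smul, add_comm]
        · have hcard : (univ.filter (fun l : L => p ∈ l ∧ x ∈ l)).card = 1 := by
            rw [Finset.card_eq_one]
            refine ⟨HasLines.mkLine (Ne.symm hx), ?_⟩
            rw [Finset.eq_singleton_iff_unique_mem]
            constructor
            · simp [(HasLines.mkLine_ax (Ne.symm hx)).1, (HasLines.mkLine_ax (Ne.symm hx)).2]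
            · intro l hl
              simp only [mem_filter, mem_univ, true_and] at hl
              exact (Nondegenerate.eq_or_eq hl.1 hl.2 (HasLines.mkLine_ax (Ne.symm hx)).1
                (HasLines.mkLine_ax (Ne.symm hx)).2).resolve_left (Ne.symm hx)
          rw [hcard, if_neg hx, one_smul, add_zero]
    _ = (∑ x, v x) + (lineCount L p - 1) • v p := by
        rw [Finset.sum_add_distrib, Finset.sum_ite_eq' univ p, if_pos (mem_univ p)]

/-- No finite projective plane is magic over a finite cyclic group: there is no injective
line-invariant function `v : P → ℤ/mℤ`. -/
theorem stmt_5 {P L : Type*} [Membership P L] [Fintype P] [Fintype L]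
    [ProjectivePlane P L] {n : ℕ} (hn : ProjectivePlane.order P L = n)
    (m : ℕ) (hm : 1 ≤ m) :
    ¬ ∃ v : P → ZMod m, Function.Injective v ∧ LineInvariant P L v := by
  classical
  haveI : NeZero m := ⟨by omega⟩
  rintro ⟨v, hinj, hLI⟩
  have hord := ProjectivePlane.one_lt_order P L
  rw [hn] at hord
  -- pick a base point
  obtain ⟨p₀⟩ : Nonempty P := Fintype.card_pos_iff.mp (by
    rw [ProjectivePlane.card_points P L]; positivity)
  haveI : Nonempty L := by
    obtain ⟨_, _, _, l, _⟩ := @ProjectivePlane.exists_config P L _ _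
    exact ⟨l⟩
  -- sums over lines through p and p₀ agree
  have key : ∀ p : P, n • v p = n • v p₀ := by
    intro p
    have h1 := sum_lines_through (L := L) v p
    have h2 := sum_lines_through (L := L) v p₀
    have hc : ∀ q : P, (Finset.univ.filter (fun l : L => q ∈ l)).card = n + 1 := by
      intro q
      have h := ProjectivePlane.lineCount_eq (L := L) q
      rw [lineCount, Nat.card_eq_fintype_card, Fintype.card_subtype, hn] at h
      exact h
    have hs : ∀ q : P, ∑ l ∈ Finset.univ.filter (fun l : L => q ∈ l), lineSum v l
        = (n + 1) • lineSum v (Classical.arbitrary L) := by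
      intro q
      rw [Finset.sum_congr rfl fun l _ => hLI l (Classical.arbitrary L), Finset.sum_const, hc]
    rw [hs p, ProjectivePlane.lineCount_eq (L := L) p, hn] at h1
    rw [hs p₀, ProjectivePlane.lineCount_eq (L := L) p₀, hn] at h2
    simp only [Nat.add_sub_cancel] at h1 h2
    have := h1.symm.trans h2
    exact add_left_cancel this
  -- the map p ↦ v p - v p₀ is injective into the n-torsion
  have hn0 : 0 < n := by omega
  have hle : Fintype.card P ≤ n := by
    have hker : ∀ p : P, n • (v p - v p₀) = 0 := by
      intro p; rw [smul_sub, key p, sub_self]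
    have hinj' : Function.Injective (fun p : P => v p - v p₀) := by
      intro a b hab
      exact hinj (by simpa [sub_left_inj] using hab)
    calc Fintype.card P
        ≤ (Finset.univ.filter (fun a : ZMod m => n • a = 0)).card := by
          rw [← Finset.card_univ]
          refine Finset.card_le_card_of_injOn (fun p => v p - v p₀) ?_ ?_
          · intro p _
            simp only [Finset.mem_coe, Finset.mem_filter, Finset.mem_univ, true_and]
            exact hker p
          · exact fun a _ b _ h => hinj' h
      _ ≤ n := IsAddCyclic.card_nsmul_eq_zero_le hn0
  rw [ProjectivePlane.card_points P L, hn] at hle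
  nlinarith
end

section
/- Let Π = (P, 𝓛) be a finite projective plane of order n with n ≥ 5. Then Π is magic over the group G = (ℤ/nℤ)³, i.e., there exists an injective line-invariant function v : P → (ℤ/nℤ)³. -/
open Configuration

open Finset

set_option linter.unusedSectionVars false
set_option maxHeartbeats 2000000

section MagicHelpers

variable {P L : Type*} [Membership P L] [Fintype P] [Fintype L] [ProjectivePlane P L]

open Classical in
noncomputable def pencil (p : P) : Finset L := univ.filter (p ∈ ·)

open Classical in
noncomputable def pts (l : L) : Finset P := univ.filter (· ∈ l)

open Classical in
lemma mem_pencil {p : P} {l : L} : l ∈ pencil (L := L) p ↔ p ∈ l := by simp [pencil]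

open Classical in
lemma mem_pts {p : P} {l : L} : p ∈ pts (P := P) l ↔ p ∈ l := by simp [pts]

lemma card_pencil (p : P) : (pencil (L := L) p).card = ProjectivePlane.order P L + 1 := by
  classical
  rw [← ProjectivePlane.lineCount_eq L p, lineCount, Nat.card_eq_fintype_card,
    Fintype.card_subtype]
  rfl

lemma card_pts (l : L) : (pts (P := P) l).card = ProjectivePlane.order P L + 1 := by
  classical
  rw [← ProjectivePlane.pointCount_eq P l, pointCount, Nat.card_eq_fintype_card,
    Fintype.card_subtype]
  rfl

lemma line_unique {p q : P} {l m : L} (hpq : p ≠ q) (hpl : p ∈ l) (hql : q ∈ l)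
    (hpm : p ∈ m) (hqm : q ∈ m) : l = m :=
  (Nondegenerate.eq_or_eq hpl hql hpm hqm).resolve_left hpq

lemma point_unique {p q : P} {l m : L} (hlm : l ≠ m) (hpl : p ∈ l) (hpm : p ∈ m)
    (hql : q ∈ l) (hqm : q ∈ m) : p = q :=
  (Nondegenerate.eq_or_eq hpl hql hpm hqm).resolve_right hlm

lemma exists_avoid {α : Type*} (s t : Finset α) (h : t.card < s.card) : ∃ x ∈ s, x ∉ t := by
  by_contra hc
  push_neg at hc
  exact absurd (Finset.card_le_card hc) (by omega)

lemma lineSum_eq_sum {G : Type*} (v : P → G) [AddCommMonoid G] (l : L) :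
    lineSum v l = ∑ x ∈ pts l, v x := by
  unfold lineSum
  rw [show {x : P | x ∈ l} = ↑(pts (P := P) l) by ext x; simp [mem_pts]]
  exact finsum_mem_coe_finset v (pts l)

/-- Key invariance lemma: a pencil-sum function has all line sums equal to the total sum. -/
lemma lineSum_pencil {G : Type*} [AddCommMonoid G] (T : L → G)
    (hG : ∀ g : G, (ProjectivePlane.order P L) • g = 0) (l : L) :
    lineSum (fun x : P => ∑ m ∈ pencil x, T m) l = ∑ m : L, T m := by
  classical
  rw [lineSum_eq_sum]
  have h1 : ∀ x : P, ∑ m ∈ pencil x, T m = ∑ m : L, if x ∈ m then T m else 0 := by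
    intro x
    rw [pencil, Finset.sum_filter]
  simp_rw [h1]
  rw [Finset.sum_comm]
  have h2 : ∀ m : L, (∑ x ∈ pts l, if x ∈ m then T m else 0)
      = ((pts (P := P) l).filter (· ∈ m)).card • T m := by
    intro m
    rw [Finset.sum_ite, Finset.sum_const, Finset.sum_const_zero, add_zero]
  simp_rw [h2]
  have h3 : ∀ m : L, m ≠ l → ((pts (P := P) l).filter (· ∈ m)).card = 1 := by
    intro m hml
    have hlm : l ≠ m := fun h => hml h.symm
    rw [Finset.card_eq_one]
    refine ⟨HasPoints.mkPoint hlm, ?_⟩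
    ext x
    simp only [Finset.mem_filter, mem_pts, Finset.mem_singleton]
    constructor
    · rintro ⟨hx1, hx2⟩
      exact point_unique hlm hx1 hx2 (HasPoints.mkPoint_ax hlm).1 (HasPoints.mkPoint_ax hlm).2
    · rintro rfl
      exact ⟨(HasPoints.mkPoint_ax hlm).1, (HasPoints.mkPoint_ax hlm).2⟩
  have h4 : ((pts (P := P) l).filter (· ∈ l)).card = ProjectivePlane.order P L + 1 := by
    rw [Finset.filter_eq_self.mpr (fun x hx => mem_pts.mp hx), card_pts]
  calc ∑ m : L, ((pts (P := P) l).filter (· ∈ m)).card • T m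
      = ∑ m : L, ((if m = l then (ProjectivePlane.order P L) • T m else 0) + T m) := by
        apply Finset.sum_congr rfl
        intro m _
        by_cases hm : m = l
        · subst hm
          rw [if_pos rfl, h4, add_smul, one_smul]
        · rw [if_neg hm, h3 m hm, one_smul, zero_add]
    _ = ∑ m : L, T m := by
        rw [Finset.sum_add_distrib, Finset.sum_ite_eq' Finset.univ l
          (fun m => (ProjectivePlane.order P L) • T m)]
        simp [hG (T l)]

lemma setValue_ne {α β : Type*} [DecidableEq α] (e : α ≃ β) (a x : α) (b : β)
    (hx : x ≠ a) (hex : e x ≠ b) : (e.setValue a b) x = e x := by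
  unfold Equiv.setValue
  simp only [Equiv.trans_apply]
  rw [Equiv.swap_apply_of_ne_of_ne hx]
  intro h
  apply hex
  rw [h, Equiv.apply_symm_apply]

lemma exists_equiv_three {α β : Type*} [Fintype α] [Fintype β] [DecidableEq α] [DecidableEq β]
    (hcard : Fintype.card α = Fintype.card β)
    (a₁ a₂ a₃ : α) (b₁ b₂ b₃ : β) (h12 : a₁ ≠ a₂) (h13 : a₁ ≠ a₃) (h23 : a₂ ≠ a₃)
    (g12 : b₁ ≠ b₂) (g13 : b₁ ≠ b₃) (g23 : b₂ ≠ b₃) :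
    ∃ e : α ≃ β, e a₁ = b₁ ∧ e a₂ = b₂ ∧ e a₃ = b₃ := by
  obtain e₀ := Fintype.equivOfCardEq hcard
  set e₁ := e₀.setValue a₁ b₁ with he₁
  set e₂ := e₁.setValue a₂ b₂ with he₂
  refine ⟨e₂.setValue a₃ b₃, ?_, ?_, ?_⟩
  · have h1 : e₁ a₁ = b₁ := Equiv.setValue_eq e₀ a₁ b₁
    have h2 : e₂ a₁ = b₁ := by
      rw [he₂, setValue_ne e₁ a₂ a₁ b₂ h12 (by rw [h1]; exact g12)]
      exact h1
    rw [setValue_ne e₂ a₃ a₁ b₃ h13 (by rw [h2]; exact g13)]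
    exact h2
  · have h2 : e₂ a₂ = b₂ := Equiv.setValue_eq e₁ a₂ b₂
    rw [setValue_ne e₂ a₃ a₂ b₃ h23 (by rw [h2]; exact g23)]
    exact h2
  · exact Equiv.setValue_eq e₂ a₃ b₃

variable {n : ℕ}

/-- Pencil labeling lemma. -/
lemma exists_labeling [NeZero n] (hn : ProjectivePlane.order P L = n)
    (O : P) (s s' : L) (hs : O ∈ s) (hs' : O ∈ s') (hss : s ≠ s')
    (a₁ a₂ a₃ : L) (hOa₁ : O ∈ a₁) (hOa₂ : O ∈ a₂) (hOa₃ : O ∈ a₃)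
    (ha₁s : a₁ ≠ s) (ha₁s' : a₁ ≠ s') (ha₂s : a₂ ≠ s) (ha₂s' : a₂ ≠ s')
    (ha₃s : a₃ ≠ s) (ha₃s' : a₃ ≠ s')
    (h12 : a₁ ≠ a₂) (h13 : a₁ ≠ a₃) (h23 : a₂ ≠ a₃)
    (b₁ b₂ b₃ : ZMod n) (hb₁ : b₁ ≠ 0) (hb₂ : b₂ ≠ 0) (hb₃ : b₃ ≠ 0)
    (g12 : b₁ ≠ b₂) (g13 : b₁ ≠ b₃) (g23 : b₂ ≠ b₃) :
    ∃ t : L → ZMod n,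
      (∀ l : L, O ∉ l → t l = 0) ∧
      t s = 0 ∧ t s' = 0 ∧
      (∀ l, O ∈ l → l ≠ s → l ≠ s' → t l ≠ 0) ∧
      (∀ l l', O ∈ l → O ∈ l' → l ≠ s → l ≠ s' → l' ≠ s → l' ≠ s' → t l = t l' → l = l') ∧
      t a₁ = b₁ ∧ t a₂ = b₂ ∧ t a₃ = b₃ ∧
      (∀ b : ZMod n, b ≠ 0 → ∃ l, O ∈ l ∧ l ≠ s ∧ l ≠ s' ∧ t l = b) ∧
      (∑ m ∈ pencil O, t m) = ∑ x : ZMod n, x := by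
  classical
  have hcardA : Fintype.card {l : L // O ∈ l ∧ l ≠ s ∧ l ≠ s'} = n - 1 := by
    rw [Fintype.card_subtype]
    have : (univ.filter (fun l : L => O ∈ l ∧ l ≠ s ∧ l ≠ s')) = (pencil O) \ {s, s'} := by
      ext l
      simp only [Finset.mem_filter, Finset.mem_univ, true_and, Finset.mem_sdiff, mem_pencil,
        Finset.mem_insert, Finset.mem_singleton]
      tauto
    rw [this, Finset.card_sdiff_of_subset (by
      intro l hl
      simp only [Finset.mem_insert, Finset.mem_singleton] at hl
      rcases hl with rfl | rfl <;> simp [mem_pencil, hs, hs'])]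
    rw [card_pencil O, hn, Finset.card_insert_of_notMem (by simp [hss]), Finset.card_singleton]
    omega
  have hcardB : Fintype.card {x : ZMod n // x ≠ 0} = n - 1 := by
    have := Fintype.card_subtype_compl (fun x : ZMod n => x = 0)
    simp only [Fintype.card_subtype_eq, ZMod.card] at this
    convert this using 2
  obtain ⟨e, he₁, he₂, he₃⟩ := exists_equiv_three (hcardA.trans hcardB.symm)
    (⟨a₁, hOa₁, ha₁s, ha₁s'⟩ : {l : L // O ∈ l ∧ l ≠ s ∧ l ≠ s'}) ⟨a₂, hOa₂, ha₂s, ha₂s'⟩ ⟨a₃, hOa₃, ha₃s, ha₃s'⟩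
    (⟨b₁, hb₁⟩ : {x : ZMod n // x ≠ 0}) ⟨b₂, hb₂⟩ ⟨b₃, hb₃⟩
    (by simp [h12]) (by simp [h13]) (by simp [h23])
    (by simp [g12]) (by simp [g13]) (by simp [g23])
  refine ⟨fun l => if h : O ∈ l ∧ l ≠ s ∧ l ≠ s' then (e ⟨l, h⟩ : ZMod n) else 0,
    ?_, ?_, ?_, ?_, ?_, ?_, ?_, ?_, ?_, ?_⟩ <;> dsimp only
  · intro l hl
    rw [dif_neg (fun h => hl h.1)]
  · rw [dif_neg (fun h => h.2.1 rfl)]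
  · rw [dif_neg (fun h => h.2.2 rfl)]
  · intro l h1 h2 h3
    rw [dif_pos ⟨h1, h2, h3⟩]
    exact (e ⟨l, h1, h2, h3⟩).2
  · intro l l' h1 h1' h2 h3 h2' h3' heq
    rw [dif_pos ⟨h1, h2, h3⟩, dif_pos ⟨h1', h2', h3'⟩] at heq
    have := e.injective (Subtype.ext heq)
    exact congrArg Subtype.val this
  · rw [dif_pos ⟨hOa₁, ha₁s, ha₁s'⟩]; exact congrArg Subtype.val he₁
  · rw [dif_pos ⟨hOa₂, ha₂s, ha₂s'⟩]; exact congrArg Subtype.val he₂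
  · rw [dif_pos ⟨hOa₃, ha₃s, ha₃s'⟩]; exact congrArg Subtype.val he₃
  · intro b hb
    obtain ⟨l, hl⟩ := e.surjective ⟨b, hb⟩
    exact ⟨l.1, l.2.1, l.2.2.1, l.2.2.2, by rw [dif_pos l.2]; rw [hl]⟩
  · have hsplit : (pencil (L := L) O) = ((pencil (L := L) O).filter (fun l => l ≠ s ∧ l ≠ s'))
        ∪ {s, s'} := by
      ext l
      simp only [Finset.mem_union, Finset.mem_filter, Finset.mem_insert, Finset.mem_singleton,
        mem_pencil]
      constructor
      · intro hl
        by_cases h1 : l = s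
        · right; left; exact h1
        by_cases h2 : l = s'
        · right; right; exact h2
        · left; exact ⟨hl, h1, h2⟩
      · rintro (⟨hl, -⟩ | rfl | rfl)
        · exact hl
        · exact hs
        · exact hs'
    rw [hsplit, Finset.sum_union (by
      rw [Finset.disjoint_insert_right, Finset.disjoint_singleton_right]
      constructor <;> simp)]
    have hsum2 : ∑ m ∈ ({s, s'} : Finset L),
        (if h : O ∈ m ∧ m ≠ s ∧ m ≠ s' then (e ⟨m, h⟩ : ZMod n) else 0) = 0 := by
      rw [Finset.sum_insert (by simp [hss]), Finset.sum_singleton,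
        dif_neg (fun h => h.2.1 rfl), dif_neg (fun h => h.2.2 rfl), add_zero]
    rw [hsum2, add_zero]
    have hsub : ∑ m ∈ ((pencil (L := L) O).filter (fun l => l ≠ s ∧ l ≠ s')),
        (if h : O ∈ m ∧ m ≠ s ∧ m ≠ s' then (e ⟨m, h⟩ : ZMod n) else 0)
        = ∑ a : {l : L // O ∈ l ∧ l ≠ s ∧ l ≠ s'}, (e a : ZMod n) := by
      rw [Finset.sum_subtype ((pencil (L := L) O).filter (fun l => l ≠ s ∧ l ≠ s'))
        (p := fun l : L => O ∈ l ∧ l ≠ s ∧ l ≠ s')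
        (by intro l; rw [Finset.mem_filter, mem_pencil])
        (fun m => if h : O ∈ m ∧ m ≠ s ∧ m ≠ s' then (e ⟨m, h⟩ : ZMod n) else 0)]
      apply Finset.sum_congr rfl
      intro m _
      rw [dif_pos m.2]
    rw [hsub]
    have h9 : ∑ a : {l : L // O ∈ l ∧ l ≠ s ∧ l ≠ s'}, (e a : ZMod n)
        = ∑ b : {x : ZMod n // x ≠ 0}, (b : ZMod n) := by
      exact Equiv.sum_comp e (fun b : {x : ZMod n // x ≠ 0} => (b : ZMod n))
    rw [h9]
    rw [← Finset.sum_subtype (Finset.univ.filter (fun x : ZMod n => x ≠ 0))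
      (p := fun x : ZMod n => x ≠ 0) (by simp) (fun x => x)]
    rw [Finset.sum_filter_of_ne (fun x _ hx => by simpa using hx)]

open Classical in
lemma sum_pencil_guard {O x : P} {m : L} (t : L → ZMod n) (hxm : x ∈ m) (hOm : O ∈ m)
    (hxO : x ≠ O) : ∑ l ∈ pencil x, (if O ∈ l then t l else 0) = t m := by
  classical
  have hfil : (pencil (L := L) x).filter (fun l => O ∈ l) = {m} := by
    ext l
    simp only [Finset.mem_filter, mem_pencil, Finset.mem_singleton]
    constructor
    · rintro ⟨h1, h2⟩
      exact line_unique hxO h1 h2 hxm hOm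
    · rintro rfl
      exact ⟨hxm, hOm⟩
  rw [← Finset.sum_filter, hfil, Finset.sum_singleton]

open Classical in
lemma sum_pencil_guard_self (O : P) (t : L → ZMod n) :
    ∑ l ∈ pencil O, (if O ∈ l then t l else 0) = ∑ l ∈ pencil O, t l := by
  classical
  apply Finset.sum_congr rfl
  intro l hl
  rw [if_pos (mem_pencil.mp hl)]

open Classical in
lemma sum_pencil_single (x : P) (m₀ : L) (g : ZMod n) :
    ∑ l ∈ pencil x, (if l = m₀ then g else 0) = if x ∈ m₀ then g else 0 := by
  classical
  rw [Finset.sum_ite_eq' (pencil x) m₀ (fun _ => g)]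
  by_cases h : x ∈ m₀ <;> simp [mem_pencil, h]

lemma card_le_five {α : Type*} [DecidableEq α] (a b c d e : α) :
    ({a, b, c, d, e} : Finset α).card ≤ 5 := by
  apply le_trans (Finset.card_insert_le _ _)
  apply Nat.succ_le_succ
  apply le_trans (Finset.card_insert_le _ _)
  apply Nat.succ_le_succ
  apply le_trans (Finset.card_insert_le _ _)
  apply Nat.succ_le_succ
  apply le_trans (Finset.card_insert_le _ _)
  apply Nat.succ_le_succ
  exact Finset.card_singleton e |>.le

lemma card_le_four {α : Type*} [DecidableEq α] (a b c d : α) :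
    ({a, b, c, d} : Finset α).card ≤ 4 := by
  apply le_trans (Finset.card_insert_le _ _)
  apply Nat.succ_le_succ
  apply le_trans (Finset.card_insert_le _ _)
  apply Nat.succ_le_succ
  apply le_trans (Finset.card_insert_le _ _)
  apply Nat.succ_le_succ
  exact Finset.card_singleton d |>.le

end MagicHelpers

/-- A projective plane of order `n ≥ 5` is magic over `(ℤ/nℤ)³`. -/
theorem stmt_11 {P L : Type*} [Membership P L] [Fintype P] [Fintype L]
    [ProjectivePlane P L] {n : ℕ} (hn : ProjectivePlane.order P L = n) (h5 : 5 ≤ n) :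
    ∃ v : P → (Fin 3 → ZMod n), Function.Injective v ∧ LineInvariant P L v := by
  classical
  haveI : NeZero n := ⟨by omega⟩
  -- arithmetic kit
  have hcast : ∀ k : ℕ, 0 < k → k < 5 → ((k : ZMod n) ≠ 0) := by
    intro k hk1 hk2 h
    rw [ZMod.natCast_eq_zero_iff] at h
    have := Nat.le_of_dvd hk1 h
    omega
  have h1 : (1 : ZMod n) ≠ 0 := by simpa using hcast 1 (by norm_num) (by norm_num)
  have h2 : (2 : ZMod n) ≠ 0 := by
    have := hcast 2 (by norm_num) (by norm_num); simpa using this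
  have h3 : (3 : ZMod n) ≠ 0 := by
    have := hcast 3 (by norm_num) (by norm_num); simpa using this
  have h4 : (4 : ZMod n) ≠ 0 := by
    have := hcast 4 (by norm_num) (by norm_num); simpa using this
  have k1m1 : (1 : ZMod n) ≠ -1 := fun h => h2 (by linear_combination h)
  have k2m1 : (2 : ZMod n) ≠ -1 := fun h => h3 (by linear_combination h)
  have k12 : (1 : ZMod n) ≠ 2 := fun h => h1 (by linear_combination -h)
  have km10 : (-1 : ZMod n) ≠ 0 := fun h => h1 (by linear_combination -h)
  -- the sum of all elements of ZMod n
  set S : ZMod n := ∑ x : ZMod n, x with hSdef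
  have hS2 : S + S = 0 := by
    have hneg : S = ∑ x : ZMod n, -x :=
      (Equiv.sum_comp (Equiv.neg (ZMod n)) (fun x : ZMod n => x)).symm
    calc S + S = ∑ x : ZMod n, x + ∑ x : ZMod n, -x := by rw [← hneg]
      _ = ∑ x : ZMod n, (x + -x) := by rw [← Finset.sum_add_distrib]
      _ = 0 := by simp
  have hS1 : S ≠ 1 := fun h => h2 (by rw [h] at hS2; linear_combination hS2)
  have hSm1 : S ≠ -1 := fun h => h2 (by rw [h] at hS2; linear_combination -hS2)
  have hSp2 : S + 2 ≠ 0 := fun h => h4 (by linear_combination (-1 : ZMod n) * hS2 + 2 * h)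
  -- the triangle
  obtain ⟨O₁, O₂, O₃, l₁, l₂, l₃, c₁₂, c₁₃, c₂₁, c₂₂, c₂₃, c₃₁, c₃₂, c₃₃⟩ :=
    @ProjectivePlane.exists_config P L _ _
  have hO23 : O₂ ≠ O₃ := fun h => c₃₃ (h ▸ c₂₃)
  set s₁ : L := HasLines.mkLine hO23 with hs₁def
  have hO2s₁ : O₂ ∈ s₁ := (HasLines.mkLine_ax hO23).1
  have hO3s₁ : O₃ ∈ s₁ := (HasLines.mkLine_ax hO23).2
  have hO1s₁ : O₁ ∉ s₁ := by
    have : s₁ = l₂ := line_unique hO23 hO2s₁ hO3s₁ c₂₂ c₃₂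
    rw [this]; exact c₁₂
  have hO12 : O₁ ≠ O₂ := fun h => hO1s₁ (h ▸ hO2s₁)
  have hO13 : O₁ ≠ O₃ := fun h => hO1s₁ (h ▸ hO3s₁)
  set s₂ : L := HasLines.mkLine hO13 with hs₂def
  set s₃ : L := HasLines.mkLine hO12 with hs₃def
  have hO1s₂ : O₁ ∈ s₂ := (HasLines.mkLine_ax hO13).1
  have hO3s₂ : O₃ ∈ s₂ := (HasLines.mkLine_ax hO13).2
  have hO1s₃ : O₁ ∈ s₃ := (HasLines.mkLine_ax hO12).1
  have hO2s₃ : O₂ ∈ s₃ := (HasLines.mkLine_ax hO12).2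
  have hO2s₂ : O₂ ∉ s₂ := by
    intro h
    exact hO1s₁ ((line_unique hO23 h hO3s₂ hO2s₁ hO3s₁) ▸ hO1s₂)
  have hO3s₃ : O₃ ∉ s₃ := by
    intro h
    exact hO1s₁ ((line_unique hO23 hO2s₃ h hO2s₁ hO3s₁) ▸ hO1s₃)
  have hs12 : s₁ ≠ s₂ := fun h => hO1s₁ (h ▸ hO1s₂)
  have hs13 : s₁ ≠ s₃ := fun h => hO1s₁ (h ▸ hO1s₃)
  have hs23 : s₂ ≠ s₃ := fun h => hO2s₂ (h ▸ hO2s₃)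
  -- uniqueness of sides
  have huniq₁ : ∀ m : L, O₂ ∈ m → O₃ ∈ m → m = s₁ :=
    fun m hm2 hm3 => line_unique hO23 hm2 hm3 hO2s₁ hO3s₁
  have huniq₂ : ∀ m : L, O₁ ∈ m → O₃ ∈ m → m = s₂ :=
    fun m hm1 hm3 => line_unique hO13 hm1 hm3 hO1s₂ hO3s₂
  have huniq₃ : ∀ m : L, O₁ ∈ m → O₂ ∈ m → m = s₃ :=
    fun m hm1 hm2 => line_unique hO12 hm1 hm2 hO1s₃ hO2s₃
  -- card of pencils and lines
  have hcardpencil : ∀ O : P, (pencil (L := L) O).card = n + 1 := fun O => by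
    rw [card_pencil, hn]
  have hcardpts : ∀ m : L, (pts (P := P) m).card = n + 1 := fun m => by
    rw [card_pts, hn]
  have hchooseL : ∀ (O : P) (a b c d e : L), ∃ m : L, O ∈ m ∧ m ≠ a ∧ m ≠ b ∧ m ≠ c ∧ m ≠ d ∧ m ≠ e := by
    intro O a b c d e
    obtain ⟨m, hm1, hm2⟩ := exists_avoid (pencil (L := L) O) {a, b, c, d, e}
      (lt_of_le_of_lt (card_le_five a b c d e) (by rw [hcardpencil]; omega))
    simp only [Finset.mem_insert, Finset.mem_singleton, not_or] at hm2
    exact ⟨m, mem_pencil.mp hm1, hm2.1, hm2.2.1, hm2.2.2.1, hm2.2.2.2.1, hm2.2.2.2.2⟩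
  have hchooseP : ∀ (m : L) (a b c d e : P), ∃ x : P, x ∈ m ∧ x ≠ a ∧ x ≠ b ∧ x ≠ c ∧ x ≠ d ∧ x ≠ e := by
    intro m a b c d e
    obtain ⟨x, hx1, hx2⟩ := exists_avoid (pts (P := P) m) {a, b, c, d, e}
      (lt_of_le_of_lt (card_le_five a b c d e) (by rw [hcardpts]; omega))
    simp only [Finset.mem_insert, Finset.mem_singleton, not_or] at hx2
    exact ⟨x, mem_pts.mp hx1, hx2.1, hx2.2.1, hx2.2.2.1, hx2.2.2.2.1, hx2.2.2.2.2⟩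
  have hchooseZ : ∀ (a b c d : ZMod n), ∃ x : ZMod n, x ≠ a ∧ x ≠ b ∧ x ≠ c ∧ x ≠ d := by
    intro a b c d
    obtain ⟨x, -, hx⟩ := exists_avoid (Finset.univ : Finset (ZMod n)) {a, b, c, d}
      (lt_of_le_of_lt (card_le_four a b c d) (by rw [Finset.card_univ, ZMod.card]; omega))
    simp only [Finset.mem_insert, Finset.mem_singleton, not_or] at hx
    exact ⟨x, hx.1, hx.2.1, hx.2.2.1, hx.2.2.2⟩
  -- choose Q
  obtain ⟨m₀, hOm₀, hm₀s₂, hm₀s₃, -, -, -⟩ := hchooseL O₁ s₂ s₃ s₂ s₂ s₂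
  have hm₀s₁ : m₀ ≠ s₁ := fun h => hO1s₁ (h ▸ hOm₀)
  set z₀ : P := HasPoints.mkPoint hm₀s₁ with hz₀def
  have hz₀ : z₀ ∈ m₀ ∧ z₀ ∈ s₁ := HasPoints.mkPoint_ax hm₀s₁
  obtain ⟨Q, hQm₀, hQO₁, hQz₀, -, -, -⟩ := hchooseP m₀ O₁ z₀ O₁ O₁ O₁
  have hQs₁ : Q ∉ s₁ := fun h => hQz₀ (point_unique hm₀s₁ hQm₀ h hz₀.1 hz₀.2)
  have hQs₂ : Q ∉ s₂ := fun h => hm₀s₂ (line_unique hQO₁ hQm₀ hOm₀ h hO1s₂)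
  have hQs₃ : Q ∉ s₃ := fun h => hm₀s₃ (line_unique hQO₁ hQm₀ hOm₀ h hO1s₃)
  have hQO₂ : Q ≠ O₂ := fun h => hQs₁ (h ▸ hO2s₁)
  have hQO₃ : Q ≠ O₃ := fun h => hQs₁ (h ▸ hO3s₁)
  set ℓQ₁ : L := HasLines.mkLine hQO₁ with hℓQ₁def
  set ℓQ₂ : L := HasLines.mkLine hQO₂ with hℓQ₂def
  set ℓQ₃ : L := HasLines.mkLine hQO₃ with hℓQ₃def
  have hQℓQ₁ : Q ∈ ℓQ₁ := (HasLines.mkLine_ax hQO₁).1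
  have hO1ℓQ₁ : O₁ ∈ ℓQ₁ := (HasLines.mkLine_ax hQO₁).2
  have hQℓQ₂ : Q ∈ ℓQ₂ := (HasLines.mkLine_ax hQO₂).1
  have hO2ℓQ₂ : O₂ ∈ ℓQ₂ := (HasLines.mkLine_ax hQO₂).2
  have hQℓQ₃ : Q ∈ ℓQ₃ := (HasLines.mkLine_ax hQO₃).1
  have hO3ℓQ₃ : O₃ ∈ ℓQ₃ := (HasLines.mkLine_ax hQO₃).2
  -- Q-lines avoid the other vertices
  have hO2ℓQ₁ : O₂ ∉ ℓQ₁ := fun h => hQs₃ ((huniq₃ ℓQ₁ hO1ℓQ₁ h) ▸ hQℓQ₁)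
  have hO3ℓQ₁ : O₃ ∉ ℓQ₁ := fun h => hQs₂ ((huniq₂ ℓQ₁ hO1ℓQ₁ h) ▸ hQℓQ₁)
  have hO1ℓQ₂ : O₁ ∉ ℓQ₂ := fun h => hQs₃ ((huniq₃ ℓQ₂ h hO2ℓQ₂) ▸ hQℓQ₂)
  have hO3ℓQ₂ : O₃ ∉ ℓQ₂ := fun h => hQs₁ ((huniq₁ ℓQ₂ hO2ℓQ₂ h) ▸ hQℓQ₂)
  have hO1ℓQ₃ : O₁ ∉ ℓQ₃ := fun h => hQs₂ ((huniq₂ ℓQ₃ h hO3ℓQ₃) ▸ hQℓQ₃)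
  have hO2ℓQ₃ : O₂ ∉ ℓQ₃ := fun h => hQs₁ ((huniq₁ ℓQ₃ h hO3ℓQ₃) ▸ hQℓQ₃)
  -- Q-lines are nonsides
  have hℓQ₁s₂ : ℓQ₁ ≠ s₂ := fun h => hQs₂ (h ▸ hQℓQ₁)
  have hℓQ₁s₃ : ℓQ₁ ≠ s₃ := fun h => hQs₃ (h ▸ hQℓQ₁)
  have hℓQ₂s₁ : ℓQ₂ ≠ s₁ := fun h => hQs₁ (h ▸ hQℓQ₂)
  have hℓQ₂s₃ : ℓQ₂ ≠ s₃ := fun h => hQs₃ (h ▸ hQℓQ₂)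
  have hℓQ₃s₁ : ℓQ₃ ≠ s₁ := fun h => hQs₁ (h ▸ hQℓQ₃)
  have hℓQ₃s₂ : ℓQ₃ ≠ s₂ := fun h => hQs₂ (h ▸ hQℓQ₃)
  -- choose Q'
  obtain ⟨m₁, hOm₁, hm₁s₂, hm₁s₃, hm₁ℓQ₁, -, -⟩ := hchooseL O₁ s₂ s₃ ℓQ₁ s₂ s₂
  have hm₁s₁ : m₁ ≠ s₁ := fun h => hO1s₁ (h ▸ hOm₁)
  have hm₁ℓQ₂ : m₁ ≠ ℓQ₂ := fun h => hO1ℓQ₂ (h ▸ hOm₁)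
  have hm₁ℓQ₃ : m₁ ≠ ℓQ₃ := fun h => hO1ℓQ₃ (h ▸ hOm₁)
  set z₁ : P := HasPoints.mkPoint hm₁s₁ with hz₁def
  have hz₁ : z₁ ∈ m₁ ∧ z₁ ∈ s₁ := HasPoints.mkPoint_ax hm₁s₁
  set w₂ : P := HasPoints.mkPoint hm₁ℓQ₂ with hw₂def
  have hw₂ : w₂ ∈ m₁ ∧ w₂ ∈ ℓQ₂ := HasPoints.mkPoint_ax hm₁ℓQ₂
  set w₃ : P := HasPoints.mkPoint hm₁ℓQ₃ with hw₃def
  have hw₃ : w₃ ∈ m₁ ∧ w₃ ∈ ℓQ₃ := HasPoints.mkPoint_ax hm₁ℓQ₃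
  obtain ⟨Q', hQ'm₁, hQ'O₁, hQ'z₁, hQ'w₂, hQ'w₃, -⟩ := hchooseP m₁ O₁ z₁ w₂ w₃ O₁
  have hQ's₁ : Q' ∉ s₁ := fun h => hQ'z₁ (point_unique hm₁s₁ hQ'm₁ h hz₁.1 hz₁.2)
  have hQ's₂ : Q' ∉ s₂ := fun h => hm₁s₂ (line_unique hQ'O₁ hQ'm₁ hOm₁ h hO1s₂)
  have hQ's₃ : Q' ∉ s₃ := fun h => hm₁s₃ (line_unique hQ'O₁ hQ'm₁ hOm₁ h hO1s₃)
  have hQ'O₂ : Q' ≠ O₂ := fun h => hQ's₁ (h ▸ hO2s₁)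
  have hQ'O₃ : Q' ≠ O₃ := fun h => hQ's₁ (h ▸ hO3s₁)
  have hQ'ℓQ₁ : Q' ∉ ℓQ₁ := fun h =>
    hQ'O₁ (point_unique hm₁ℓQ₁ hQ'm₁ h hOm₁ hO1ℓQ₁)
  have hQ'ℓQ₂ : Q' ∉ ℓQ₂ := fun h => hQ'w₂ (point_unique hm₁ℓQ₂ hQ'm₁ h hw₂.1 hw₂.2)
  have hQ'ℓQ₃ : Q' ∉ ℓQ₃ := fun h => hQ'w₃ (point_unique hm₁ℓQ₃ hQ'm₁ h hw₃.1 hw₃.2)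
  have hQ'Q : Q' ≠ Q := fun h => hQ'ℓQ₁ (h ▸ hQℓQ₁)
  set ℓQ'₁ : L := HasLines.mkLine hQ'O₁ with hℓQ'₁def
  set ℓQ'₂ : L := HasLines.mkLine hQ'O₂ with hℓQ'₂def
  set ℓQ'₃ : L := HasLines.mkLine hQ'O₃ with hℓQ'₃def
  have hQ'ℓQ'₁ : Q' ∈ ℓQ'₁ := (HasLines.mkLine_ax hQ'O₁).1
  have hO1ℓQ'₁ : O₁ ∈ ℓQ'₁ := (HasLines.mkLine_ax hQ'O₁).2
  have hQ'ℓQ'₂ : Q' ∈ ℓQ'₂ := (HasLines.mkLine_ax hQ'O₂).1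
  have hO2ℓQ'₂ : O₂ ∈ ℓQ'₂ := (HasLines.mkLine_ax hQ'O₂).2
  have hQ'ℓQ'₃ : Q' ∈ ℓQ'₃ := (HasLines.mkLine_ax hQ'O₃).1
  have hO3ℓQ'₃ : O₃ ∈ ℓQ'₃ := (HasLines.mkLine_ax hQ'O₃).2
  have hℓQ'₁s₂ : ℓQ'₁ ≠ s₂ := fun h => hQ's₂ (h ▸ hQ'ℓQ'₁)
  have hℓQ'₁s₃ : ℓQ'₁ ≠ s₃ := fun h => hQ's₃ (h ▸ hQ'ℓQ'₁)
  have hℓQ'₂s₁ : ℓQ'₂ ≠ s₁ := fun h => hQ's₁ (h ▸ hQ'ℓQ'₂)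
  have hℓQ'₂s₃ : ℓQ'₂ ≠ s₃ := fun h => hQ's₃ (h ▸ hQ'ℓQ'₂)
  have hℓQ'₃s₁ : ℓQ'₃ ≠ s₁ := fun h => hQ's₁ (h ▸ hQ'ℓQ'₃)
  have hℓQ'₃s₂ : ℓQ'₃ ≠ s₂ := fun h => hQ's₂ (h ▸ hQ'ℓQ'₃)
  have hℓQ'₁ℓQ₁ : ℓQ'₁ ≠ ℓQ₁ := fun h => hQ'ℓQ₁ (h ▸ hQ'ℓQ'₁)
  have hℓQ'₂ℓQ₂ : ℓQ'₂ ≠ ℓQ₂ := fun h => hQ'ℓQ₂ (h ▸ hQ'ℓQ'₂)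
  have hℓQ'₃ℓQ₃ : ℓQ'₃ ≠ ℓQ₃ := fun h => hQ'ℓQ₃ (h ▸ hQ'ℓQ'₃)
  -- labeling t₃ on the pencil of O₃ (sides s₁, s₂)
  obtain ⟨G₃, hO3G₃, hG₃s₁, hG₃s₂, hG₃ℓQ₃, hG₃ℓQ'₃, -⟩ := hchooseL O₃ s₁ s₂ ℓQ₃ ℓQ'₃ s₁
  obtain ⟨t₃, ht₃guard, ht₃s₁, ht₃s₂, ht₃ne, ht₃inj, ht₃Q, ht₃Q', ht₃G, ht₃surj, ht₃sum⟩ :=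
    exists_labeling hn O₃ s₁ s₂ hO3s₁ hO3s₂ hs12
      ℓQ₃ ℓQ'₃ G₃ hO3ℓQ₃ hO3ℓQ'₃ hO3G₃
      hℓQ₃s₁ hℓQ₃s₂ hℓQ'₃s₁ hℓQ'₃s₂ hG₃s₁ hG₃s₂
      (Ne.symm hℓQ'₃ℓQ₃) (fun h => hG₃ℓQ₃ h.symm) (fun h => hG₃ℓQ'₃ h.symm)
      1 (-1) 2 h1 km10 h2 k1m1 k12 (fun h => k2m1 h.symm)
  -- F₃ = the line in the pencil of O₃ with value S + 2
  obtain ⟨F₃, hO3F₃, hF₃s₁, hF₃s₂, ht₃F₃⟩ := ht₃surj (S + 2) hSp2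
  -- F₁ and labeling t₁ on the pencil of O₁ (sides s₂, s₃)
  obtain ⟨F₁, hO1F₁, hF₁s₂, hF₁s₃, hF₁ℓQ₁, hF₁ℓQ'₁, -⟩ := hchooseL O₁ s₂ s₃ ℓQ₁ ℓQ'₁ s₂
  obtain ⟨t₁, ht₁guard, ht₁s₂, ht₁s₃, ht₁ne, ht₁inj, ht₁Q, ht₁Q', ht₁F, ht₁surj, ht₁sum⟩ :=
    exists_labeling hn O₁ s₂ s₃ hO1s₂ hO1s₃ hs23
      ℓQ₁ ℓQ'₁ F₁ hO1ℓQ₁ hO1ℓQ'₁ hO1F₁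
      hℓQ₁s₂ hℓQ₁s₃ hℓQ'₁s₂ hℓQ'₁s₃ hF₁s₂ hF₁s₃
      (Ne.symm hℓQ'₁ℓQ₁) (fun h => hF₁ℓQ₁ h.symm) (fun h => hF₁ℓQ'₁ h.symm)
      1 (-1) 2 h1 km10 h2 k1m1 k12 (fun h => k2m1 h.symm)
  -- the point r = F₁ ∩ F₃ and the line O₂r to avoid
  have hF₁F₃ : F₁ ≠ F₃ := by
    intro h
    have hO1F₃ : O₁ ∈ F₃ := h ▸ hO1F₁
    exact hF₃s₂ (huniq₂ F₃ hO1F₃ hO3F₃)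
  set r : P := HasPoints.mkPoint hF₁F₃ with hrdef
  have hr : r ∈ F₁ ∧ r ∈ F₃ := HasPoints.mkPoint_ax hF₁F₃
  have hrO₂ : r ≠ O₂ := by
    intro h
    exact hF₁s₃ (huniq₃ F₁ hO1F₁ (h ▸ hr.1))
  set ℓr : L := HasLines.mkLine hrO₂ with hℓrdef
  have hrℓr : r ∈ ℓr := (HasLines.mkLine_ax hrO₂).1
  have hO2ℓr : O₂ ∈ ℓr := (HasLines.mkLine_ax hrO₂).2
  -- F₂ and labeling t₂ on the pencil of O₂ (sides s₁, s₃)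
  obtain ⟨F₂, hO2F₂, hF₂s₁, hF₂s₃, hF₂ℓQ₂, hF₂ℓQ'₂, hF₂ℓr⟩ := hchooseL O₂ s₁ s₃ ℓQ₂ ℓQ'₂ ℓr
  obtain ⟨t₂, ht₂guard, ht₂s₁, ht₂s₃, ht₂ne, ht₂inj, ht₂Q, ht₂Q', ht₂F, ht₂surj, ht₂sum⟩ :=
    exists_labeling hn O₂ s₁ s₃ hO2s₁ hO2s₃ hs13
      ℓQ₂ ℓQ'₂ F₂ hO2ℓQ₂ hO2ℓQ'₂ hO2F₂
      hℓQ₂s₁ hℓQ₂s₃ hℓQ'₂s₁ hℓQ'₂s₃ hF₂s₁ hF₂s₃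
      (Ne.symm hℓQ'₂ℓQ₂) (fun h => hF₂ℓQ₂ h.symm) (fun h => hF₂ℓQ'₂ h.symm)
      1 (-1) 2 h1 km10 h2 k1m1 k12 (fun h => k2m1 h.symm)
  -- non-concurrency of F₁, F₂, F₃
  have hFnc : ∀ x : P, x ∈ F₁ → x ∈ F₂ → x ∉ F₃ := by
    intro x hx1 hx2 hx3
    have hxr : x = r := point_unique hF₁F₃ hx1 hx3 hr.1 hr.2
    subst hxr
    exact hF₂ℓr (line_unique hrO₂ hx2 hO2F₂ hrℓr hO2ℓr ▸ rfl)
  -- the line lam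
  obtain ⟨lam, hO2lam, hlams₁, hlams₃, hlamℓQ₂, hlamℓQ'₂, hlamF₂⟩ := hchooseL O₂ s₁ s₃ ℓQ₂ ℓQ'₂ F₂
  have hO1lam : O₁ ∉ lam := fun h => hlams₃ (huniq₃ lam h hO2lam)
  have hO3lam : O₃ ∉ lam := fun h => hlams₁ (huniq₁ lam hO2lam h)
  have hQlam : Q ∉ lam := fun h => hlamℓQ₂ (line_unique hQO₂ h hO2lam hQℓQ₂ hO2ℓQ₂)
  have hQ'lam : Q' ∉ lam := fun h => hlamℓQ'₂ (line_unique hQ'O₂ h hO2lam hQ'ℓQ'₂ hO2ℓQ'₂)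
  have hlamℓQ₁ : lam ≠ ℓQ₁ := fun h => hO2ℓQ₁ (h ▸ hO2lam)
  -- the point xQ = lam ∩ ℓQ₁
  set xQ : P := HasPoints.mkPoint hlamℓQ₁ with hxQdef
  have hxQ : xQ ∈ lam ∧ xQ ∈ ℓQ₁ := HasPoints.mkPoint_ax hlamℓQ₁
  have hxQO₃ : xQ ≠ O₃ := fun h => hO3lam (h ▸ hxQ.1)
  set ℓ₃xQ : L := HasLines.mkLine hxQO₃ with hℓ₃xQdef
  have hxQℓ₃xQ : xQ ∈ ℓ₃xQ := (HasLines.mkLine_ax hxQO₃).1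
  have hO3ℓ₃xQ : O₃ ∈ ℓ₃xQ := (HasLines.mkLine_ax hxQO₃).2
  -- the line ℓ'' with t₂ ℓ'' = t₂ lam + 1
  have ht₂lam : t₂ lam ≠ -1 := by
    intro h
    apply hlamℓQ'₂
    exact ht₂inj lam ℓQ'₂ hO2lam hO2ℓQ'₂ hlams₁ hlams₃ hℓQ'₂s₁ hℓQ'₂s₃ (h.trans ht₂Q'.symm)
  have ht₂lam1 : t₂ lam + 1 ≠ 0 := by
    intro h
    apply ht₂lam
    linear_combination h
  obtain ⟨ℓpp, hO2ℓpp, hℓpps₁, hℓpps₃, ht₂ℓpp⟩ := ht₂surj (t₂ lam + 1) ht₂lam1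
  have hℓQ₁ℓpp : ℓQ₁ ≠ ℓpp := fun h => hO2ℓQ₁ (h ▸ hO2ℓpp)
  set xpp : P := HasPoints.mkPoint hℓQ₁ℓpp with hxppdef
  have hxpp : xpp ∈ ℓQ₁ ∧ xpp ∈ ℓpp := HasPoints.mkPoint_ax hℓQ₁ℓpp
  have hxppO₃ : xpp ≠ O₃ := fun h => hO3ℓQ₁ (h ▸ hxpp.1)
  set ℓ₃xpp : L := HasLines.mkLine hxppO₃ with hℓ₃xppdef
  have hxppℓ₃xpp : xpp ∈ ℓ₃xpp := (HasLines.mkLine_ax hxppO₃).1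
  have hO3ℓ₃xpp : O₃ ∈ ℓ₃xpp := (HasLines.mkLine_ax hxppO₃).2
  -- choose δ
  obtain ⟨δ, hδ0, hδm1, hδxQ, hδxpp⟩ := hchooseZ (0 : ZMod n) (-1) (1 - t₃ ℓ₃xQ) (t₃ ℓ₃xpp - 1)
  -- definitions of the labeling sums
  set wP : P → ZMod n := fun x =>
    (if x ∈ s₁ then (1 : ZMod n) else 0) + (if x ∈ s₂ then (1 : ZMod n) else 0)
      + (if x ∈ s₃ then (-1 : ZMod n) else 0) with hwPdef
  set wL : L → ZMod n := fun l =>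
    (if l = s₁ then (1 : ZMod n) else 0) + (if l = s₂ then (1 : ZMod n) else 0)
      + (if l = s₃ then (-1 : ZMod n) else 0) with hwLdef
  set T₁ : L → ZMod n := fun l => (if O₁ ∈ l then t₁ l else 0) + wL l with hT₁def
  set T₂ : L → ZMod n := fun l => (if O₂ ∈ l then t₂ l else 0) + wL l with hT₂def
  set T₃ : L → ZMod n := fun l =>
    ((if O₃ ∈ l then t₃ l else 0) + wL l) + (if l = lam then δ else 0) with hT₃def
  set cc₁ : P → ZMod n := fun x => ∑ l ∈ pencil x, T₁ l with hcc₁def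
  set cc₂ : P → ZMod n := fun x => ∑ l ∈ pencil x, T₂ l with hcc₂def
  set cc₃ : P → ZMod n := fun x => ∑ l ∈ pencil x, T₃ l with hcc₃def
  set v : P → Fin 3 → ZMod n := fun x => ![cc₁ x, cc₂ x, cc₃ x] with hvdef
  -- evaluation of the w-part
  have hwsum : ∀ x : P, ∑ l ∈ pencil x, wL l = wP x := by
    intro x
    rw [hwLdef, hwPdef]
    dsimp only
    rw [Finset.sum_add_distrib, Finset.sum_add_distrib,
      sum_pencil_single x s₁ (1 : ZMod n), sum_pencil_single x s₂ (1 : ZMod n),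
      sum_pencil_single x s₃ (-1 : ZMod n)]
  -- evaluation lemmas for the coordinates
  have hE₁ : ∀ (x : P) (m : L), x ∈ m → O₁ ∈ m → x ≠ O₁ → cc₁ x = t₁ m + wP x := by
    intro x m hxm hOm hxO
    rw [hcc₁def]
    dsimp only
    rw [hT₁def]
    dsimp only
    rw [Finset.sum_add_distrib, sum_pencil_guard t₁ hxm hOm hxO, hwsum]
  have hE₂ : ∀ (x : P) (m : L), x ∈ m → O₂ ∈ m → x ≠ O₂ → cc₂ x = t₂ m + wP x := by
    intro x m hxm hOm hxO
    rw [hcc₂def]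
    dsimp only
    rw [hT₂def]
    dsimp only
    rw [Finset.sum_add_distrib, sum_pencil_guard t₂ hxm hOm hxO, hwsum]
  have hE₃ : ∀ (x : P) (m : L), x ∈ m → O₃ ∈ m → x ≠ O₃ →
      cc₃ x = t₃ m + wP x + (if x ∈ lam then δ else 0) := by
    intro x m hxm hOm hxO
    rw [hcc₃def]
    dsimp only
    rw [hT₃def]
    dsimp only
    rw [Finset.sum_add_distrib, Finset.sum_add_distrib,
      sum_pencil_guard t₃ hxm hOm hxO, hwsum, sum_pencil_single x lam δ]
  have hE₁O : cc₁ O₁ = S := by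
    rw [hcc₁def]
    dsimp only
    rw [hT₁def]
    dsimp only
    rw [Finset.sum_add_distrib, sum_pencil_guard_self O₁ t₁, ht₁sum, hwsum, hwPdef]
    dsimp only
    rw [if_neg hO1s₁, if_pos hO1s₂, if_pos hO1s₃]
    ring
  have hE₂O : cc₂ O₂ = S := by
    rw [hcc₂def]
    dsimp only
    rw [hT₂def]
    dsimp only
    rw [Finset.sum_add_distrib, sum_pencil_guard_self O₂ t₂, ht₂sum, hwsum, hwPdef]
    dsimp only
    rw [if_pos hO2s₁, if_neg hO2s₂, if_pos hO2s₃]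
    ring
  have hE₃O : cc₃ O₃ = S + 2 := by
    rw [hcc₃def]
    dsimp only
    rw [hT₃def]
    dsimp only
    rw [Finset.sum_add_distrib, Finset.sum_add_distrib, sum_pencil_guard_self O₃ t₃,
      ht₃sum, hwsum, sum_pencil_single O₃ lam δ, if_neg hO3lam, hwPdef]
    dsimp only
    rw [if_pos hO3s₁, if_pos hO3s₂, if_neg hO3s₃]
    ring
  -- w-values on location classes
  have hwOff : ∀ x : P, x ∉ s₁ → x ∉ s₂ → x ∉ s₃ → wP x = 0 := by
    intro x hx1 hx2 hx3
    rw [hwPdef]; dsimp only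
    rw [if_neg hx1, if_neg hx2, if_neg hx3]; ring
  have hws₁ : ∀ x : P, x ∈ s₁ → x ∉ s₂ → x ∉ s₃ → wP x = 1 := by
    intro x hx1 hx2 hx3
    rw [hwPdef]; dsimp only
    rw [if_pos hx1, if_neg hx2, if_neg hx3]; ring
  have hws₂ : ∀ x : P, x ∉ s₁ → x ∈ s₂ → x ∉ s₃ → wP x = 1 := by
    intro x hx1 hx2 hx3
    rw [hwPdef]; dsimp only
    rw [if_neg hx1, if_pos hx2, if_neg hx3]; ring
  have hws₃ : ∀ x : P, x ∉ s₁ → x ∉ s₂ → x ∈ s₃ → wP x = -1 := by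
    intro x hx1 hx2 hx3
    rw [hwPdef]; dsimp only
    rw [if_neg hx1, if_neg hx2, if_pos hx3]; ring
  -- vertex coordinate values
  have hvO₁ : cc₁ O₁ = S ∧ cc₂ O₁ = 0 ∧ cc₃ O₁ = 0 := by
    refine ⟨hE₁O, ?_, ?_⟩
    · rw [hE₂ O₁ s₃ hO1s₃ hO2s₃ hO12, ht₂s₃, hwPdef]
      dsimp only
      rw [if_neg hO1s₁, if_pos hO1s₂, if_pos hO1s₃]
      ring
    · rw [hE₃ O₁ s₂ hO1s₂ hO3s₂ hO13, ht₃s₂, if_neg hO1lam, hwPdef]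
      dsimp only
      rw [if_neg hO1s₁, if_pos hO1s₂, if_pos hO1s₃]
      ring
  have hvO₂ : cc₁ O₂ = 0 ∧ cc₂ O₂ = S ∧ cc₃ O₂ = δ := by
    refine ⟨?_, hE₂O, ?_⟩
    · rw [hE₁ O₂ s₃ hO2s₃ hO1s₃ (Ne.symm hO12), ht₁s₃, hwPdef]
      dsimp only
      rw [if_pos hO2s₁, if_neg hO2s₂, if_pos hO2s₃]
      ring
    · rw [hE₃ O₂ s₁ hO2s₁ hO3s₁ hO23, ht₃s₁, if_pos hO2lam, hwPdef]
      dsimp only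
      rw [if_pos hO2s₁, if_neg hO2s₂, if_pos hO2s₃]
      ring
  have hvO₃ : cc₁ O₃ = 2 ∧ cc₂ O₃ = 2 ∧ cc₃ O₃ = S + 2 := by
    refine ⟨?_, ?_, hE₃O⟩
    · rw [hE₁ O₃ s₂ hO3s₂ hO1s₂ (Ne.symm hO13), ht₁s₂, hwPdef]
      dsimp only
      rw [if_pos hO3s₁, if_pos hO3s₂, if_neg hO3s₃]
      ring
    · rw [hE₂ O₃ s₁ hO3s₁ hO2s₁ (Ne.symm hO23), ht₂s₁, hwPdef]
      dsimp only
      rw [if_pos hO3s₁, if_pos hO3s₂, if_neg hO3s₃]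
      ring
  refine ⟨v, ?_, ?_⟩
  · -- injectivity
    intro x y hxy
    by_cases hxyeq : x = y
    · exact hxyeq
    exfalso
    have e₁ : cc₁ x = cc₁ y := by
      have h := congrFun hxy 0
      rw [hvdef] at h
      simpa using h
    have e₂ : cc₂ x = cc₂ y := by
      have h := congrFun hxy 1
      rw [hvdef] at h
      simpa using h
    have e₃ : cc₃ x = cc₃ y := by
      have h := congrFun hxy 2
      rw [hvdef] at h
      simpa using h
    -- location classification
    have d12 : ∀ z : P, z ∈ s₁ → z ∈ s₂ → z = O₃ :=
      fun z a b => point_unique hs12 a b hO3s₁ hO3s₂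
    have d13 : ∀ z : P, z ∈ s₁ → z ∈ s₃ → z = O₂ :=
      fun z a b => point_unique hs13 a b hO2s₁ hO2s₃
    have d23 : ∀ z : P, z ∈ s₂ → z ∈ s₃ → z = O₁ :=
      fun z a b => point_unique hs23 a b hO1s₂ hO1s₃
    have hclass : ∀ z : P, z = O₁ ∨ z = O₂ ∨ z = O₃ ∨
        (z ∉ s₁ ∧ z ∉ s₂ ∧ z ∉ s₃) ∨ (z ∈ s₁ ∧ z ∉ s₂ ∧ z ∉ s₃) ∨
        (z ∉ s₁ ∧ z ∈ s₂ ∧ z ∉ s₃) ∨ (z ∉ s₁ ∧ z ∉ s₂ ∧ z ∈ s₃) := by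
      intro z
      by_cases c1 : z ∈ s₁ <;> by_cases c2 : z ∈ s₂ <;> by_cases c3 : z ∈ s₃
      · exact Or.inr (Or.inr (Or.inl (d12 z c1 c2)))
      · exact Or.inr (Or.inr (Or.inl (d12 z c1 c2)))
      · exact Or.inr (Or.inl (d13 z c1 c3))
      · exact Or.inr (Or.inr (Or.inr (Or.inr (Or.inl ⟨c1, c2, c3⟩))))
      · exact Or.inl (d23 z c2 c3)
      · exact Or.inr (Or.inr (Or.inr (Or.inr (Or.inr (Or.inl ⟨c1, c2, c3⟩)))))
      · exact Or.inr (Or.inr (Or.inr (Or.inr (Or.inr (Or.inr ⟨c1, c2, c3⟩)))))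
      · exact Or.inr (Or.inr (Or.inr (Or.inl ⟨c1, c2, c3⟩)))
    have hline : ∀ (z O : P) (hz : z ≠ O), ∃ m : L, z ∈ m ∧ O ∈ m :=
      fun z O hz => ⟨HasLines.mkLine hz, HasLines.mkLine_ax hz⟩
    -- CLAIM: two distinct off-side points
    have clOffOff : ∀ a b : P, a ≠ b → (a ∉ s₁ ∧ a ∉ s₂ ∧ a ∉ s₃) →
        (b ∉ s₁ ∧ b ∉ s₂ ∧ b ∉ s₃) → cc₁ a = cc₁ b → cc₂ a = cc₂ b → False := by
      intro a b hab ha hb E1 E2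
      have haO₁ : a ≠ O₁ := fun e => ha.2.1 (e ▸ hO1s₂)
      have haO₂ : a ≠ O₂ := fun e => ha.1 (e ▸ hO2s₁)
      have hbO₁ : b ≠ O₁ := fun e => hb.2.1 (e ▸ hO1s₂)
      have hbO₂ : b ≠ O₂ := fun e => hb.1 (e ▸ hO2s₁)
      obtain ⟨m1, ham1, hO1m1⟩ := hline a O₁ haO₁
      obtain ⟨m1', hbm1, hO1m1'⟩ := hline b O₁ hbO₁
      obtain ⟨m2, ham2, hO2m2⟩ := hline a O₂ haO₂
      obtain ⟨m2', hbm2, hO2m2'⟩ := hline b O₂ hbO₂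
      rw [hE₁ a m1 ham1 hO1m1 haO₁, hE₁ b m1' hbm1 hO1m1' hbO₁,
        hwOff a ha.1 ha.2.1 ha.2.2, hwOff b hb.1 hb.2.1 hb.2.2, add_zero, add_zero] at E1
      rw [hE₂ a m2 ham2 hO2m2 haO₂, hE₂ b m2' hbm2 hO2m2' hbO₂,
        hwOff a ha.1 ha.2.1 ha.2.2, hwOff b hb.1 hb.2.1 hb.2.2, add_zero, add_zero] at E2
      have hm1 : m1 = m1' := ht₁inj m1 m1' hO1m1 hO1m1'
        (fun h => ha.2.1 (h ▸ ham1)) (fun h => ha.2.2 (h ▸ ham1))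
        (fun h => hb.2.1 (h ▸ hbm1)) (fun h => hb.2.2 (h ▸ hbm1)) E1
      have hm2 : m2 = m2' := ht₂inj m2 m2' hO2m2 hO2m2'
        (fun h => ha.1 (h ▸ ham2)) (fun h => ha.2.2 (h ▸ ham2))
        (fun h => hb.1 (h ▸ hbm2)) (fun h => hb.2.2 (h ▸ hbm2)) E2
      have hm12 : m1 ≠ m2 := by
        intro h
        exact ha.2.2 ((huniq₃ m1 hO1m1 (h ▸ hO2m2)) ▸ ham1)
      exact hab (point_unique hm12 ham1 ham2 (hm1 ▸ hbm1) (hm2 ▸ hbm2))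
    -- CLAIM: off-side point and a point on s₁ only
    have clOffS₁ : ∀ a b : P, (a ∉ s₁ ∧ a ∉ s₂ ∧ a ∉ s₃) →
        (b ∈ s₁ ∧ b ∉ s₂ ∧ b ∉ s₃) →
        cc₁ a = cc₁ b → cc₂ a = cc₂ b → cc₃ a = cc₃ b → False := by
      intro a b ha hb E1 E2 E3
      have haO₁ : a ≠ O₁ := fun e => ha.2.1 (e ▸ hO1s₂)
      have haO₂ : a ≠ O₂ := fun e => ha.1 (e ▸ hO2s₁)
      have haO₃ : a ≠ O₃ := fun e => ha.1 (e ▸ hO3s₁)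
      have hbO₁ : b ≠ O₁ := fun e => hb.2.1 (e ▸ hO1s₂)
      have hbO₂ : b ≠ O₂ := fun e => hb.2.2 (e ▸ hO2s₃)
      have hbO₃ : b ≠ O₃ := fun e => hb.2.1 (e ▸ hO3s₂)
      have hwa : wP a = 0 := hwOff a ha.1 ha.2.1 ha.2.2
      have hwb : wP b = 1 := hws₁ b hb.1 hb.2.1 hb.2.2
      obtain ⟨m2, ham2, hO2m2⟩ := hline a O₂ haO₂
      rw [hE₂ a m2 ham2 hO2m2 haO₂, hE₂ b s₁ hb.1 hO2s₁ hbO₂, ht₂s₁, hwa, hwb,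
        add_zero, zero_add] at E2
      by_cases haLam : a ∈ lam
      · have hm2lam : m2 = lam := line_unique haO₂ ham2 hO2m2 haLam hO2lam
        rw [hm2lam] at E2
        exact hlamℓQ₂ (ht₂inj lam ℓQ₂ hO2lam hO2ℓQ₂ hlams₁ hlams₃ hℓQ₂s₁ hℓQ₂s₃
          (E2.trans ht₂Q.symm))
      · have hm2 : m2 = ℓQ₂ := ht₂inj m2 ℓQ₂ hO2m2 hO2ℓQ₂
          (fun h => ha.1 (h ▸ ham2)) (fun h => ha.2.2 (h ▸ ham2)) hℓQ₂s₁ hℓQ₂s₃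
          (E2.trans ht₂Q.symm)
        have haℓQ₂ : a ∈ ℓQ₂ := hm2 ▸ ham2
        have hbLam : b ∉ lam := by
          intro h
          exact hbO₂ (point_unique hlams₁ h hb.1 hO2lam hO2s₁)
        obtain ⟨m3, ham3, hO3m3⟩ := hline a O₃ haO₃
        rw [hE₃ a m3 ham3 hO3m3 haO₃, hE₃ b s₁ hb.1 hO3s₁ hbO₃, ht₃s₁, hwa, hwb,
          if_neg haLam, if_neg hbLam, add_zero, add_zero, add_zero, zero_add] at E3
        have hm3 : m3 = ℓQ₃ := ht₃inj m3 ℓQ₃ hO3m3 hO3ℓQ₃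
          (fun h => ha.1 (h ▸ ham3)) (fun h => ha.2.1 (h ▸ ham3)) hℓQ₃s₁ hℓQ₃s₂
          (E3.trans ht₃Q.symm)
        have haℓQ₃ : a ∈ ℓQ₃ := hm3 ▸ ham3
        have hℓQ₂ℓQ₃ : ℓQ₂ ≠ ℓQ₃ := by
          intro h
          exact hQs₁ ((huniq₁ ℓQ₂ hO2ℓQ₂ (h ▸ hO3ℓQ₃)) ▸ hQℓQ₂)
        have haQ : a = Q := point_unique hℓQ₂ℓQ₃ haℓQ₂ haℓQ₃ hQℓQ₂ hQℓQ₃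
        subst haQ
        obtain ⟨m1', hbm1, hO1m1'⟩ := hline b O₁ hbO₁
        rw [hE₁ a ℓQ₁ hQℓQ₁ hO1ℓQ₁ hQO₁, hE₁ b m1' hbm1 hO1m1' hbO₁, ht₁Q, hwa, hwb,
          add_zero] at E1
        have : t₁ m1' = 0 := by linear_combination -E1
        exact ht₁ne m1' hO1m1' (fun h => hb.2.1 (h ▸ hbm1)) (fun h => hb.2.2 (h ▸ hbm1)) this
    -- CLAIM: off-side point and a point on s₂ only
    have clOffS₂ : ∀ a b : P, (a ∉ s₁ ∧ a ∉ s₂ ∧ a ∉ s₃) →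
        (b ∉ s₁ ∧ b ∈ s₂ ∧ b ∉ s₃) →
        cc₁ a = cc₁ b → cc₂ a = cc₂ b → cc₃ a = cc₃ b → False := by
      intro a b ha hb E1 E2 E3
      have haO₁ : a ≠ O₁ := fun e => ha.2.1 (e ▸ hO1s₂)
      have haO₂ : a ≠ O₂ := fun e => ha.1 (e ▸ hO2s₁)
      have haO₃ : a ≠ O₃ := fun e => ha.1 (e ▸ hO3s₁)
      have hbO₁ : b ≠ O₁ := fun e => hb.2.2 (e ▸ hO1s₃)
      have hbO₂ : b ≠ O₂ := fun e => hb.1 (e ▸ hO2s₁)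
      have hbO₃ : b ≠ O₃ := fun e => hb.1 (e ▸ hO3s₁)
      have hwa : wP a = 0 := hwOff a ha.1 ha.2.1 ha.2.2
      have hwb : wP b = 1 := hws₂ b hb.1 hb.2.1 hb.2.2
      obtain ⟨m1, ham1, hO1m1⟩ := hline a O₁ haO₁
      rw [hE₁ a m1 ham1 hO1m1 haO₁, hE₁ b s₂ hb.2.1 hO1s₂ hbO₁, ht₁s₂, hwa, hwb,
        add_zero, zero_add] at E1
      have hm1 : m1 = ℓQ₁ := ht₁inj m1 ℓQ₁ hO1m1 hO1ℓQ₁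
        (fun h => ha.2.1 (h ▸ ham1)) (fun h => ha.2.2 (h ▸ ham1)) hℓQ₁s₂ hℓQ₁s₃
        (E1.trans ht₁Q.symm)
      have haℓQ₁ : a ∈ ℓQ₁ := hm1 ▸ ham1
      by_cases haLam : a ∈ lam
      · -- a = xQ
        have haxQ : a = xQ := point_unique hlamℓQ₁ haLam haℓQ₁ hxQ.1 hxQ.2
        have haℓ₃xQ : a ∈ ℓ₃xQ := by rw [haxQ]; exact hxQℓ₃xQ
        have haO₃' : a ≠ O₃ := by rw [haxQ]; exact hxQO₃
        by_cases hbLam : b ∈ lam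
        · -- coordinate 3 gives t₃ ℓ₃xQ = 1, pinning xQ = Q
          rw [hE₃ a ℓ₃xQ haℓ₃xQ hO3ℓ₃xQ haO₃', hE₃ b s₂ hb.2.1 hO3s₂ hbO₃, ht₃s₂,
            if_pos haLam, if_pos hbLam, hwa, hwb, add_zero, zero_add] at E3
          have hval : t₃ ℓ₃xQ = 1 := by linear_combination E3
          have hℓ₃s₁ : ℓ₃xQ ≠ s₁ := by
            intro h
            rw [h, ht₃s₁] at hval
            exact h1 hval.symm
          have hℓ₃s₂ : ℓ₃xQ ≠ s₂ := by
            intro h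
            rw [h, ht₃s₂] at hval
            exact h1 hval.symm
          have : ℓ₃xQ = ℓQ₃ := ht₃inj ℓ₃xQ ℓQ₃ hO3ℓ₃xQ hO3ℓQ₃ hℓ₃s₁ hℓ₃s₂ hℓQ₃s₁ hℓQ₃s₂
            (hval.trans ht₃Q.symm)
          have hℓQ₁ℓQ₃ : ℓQ₁ ≠ ℓQ₃ := by
            intro h
            exact hQs₂ ((huniq₂ ℓQ₁ hO1ℓQ₁ (h ▸ hO3ℓQ₃)) ▸ hQℓQ₁)
          have hxQQ : xQ = Q := point_unique hℓQ₁ℓQ₃ hxQ.2 (this ▸ hxQℓ₃xQ) hQℓQ₁ hQℓQ₃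
          apply hQlam
          rw [← hxQQ, ← haxQ]
          exact haLam
        · -- δ = 1 - t₃ ℓ₃xQ, contradiction with the choice of δ
          rw [hE₃ a ℓ₃xQ haℓ₃xQ hO3ℓ₃xQ haO₃', hE₃ b s₂ hb.2.1 hO3s₂ hbO₃, ht₃s₂,
            if_pos haLam, if_neg hbLam, hwa, hwb, add_zero, zero_add, add_zero] at E3
          exact hδxQ (by linear_combination E3)
      · by_cases hbLam : b ∈ lam
        · -- a = xpp and δ = t₃ ℓ₃xpp - 1
          have hblam2 : ∀ m : L, b ∈ m → O₂ ∈ m → m = lam :=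
            fun m hb1 hb2 => line_unique hbO₂ hb1 hb2 hbLam hO2lam
          obtain ⟨m2, ham2, hO2m2⟩ := hline a O₂ haO₂
          rw [hE₂ a m2 ham2 hO2m2 haO₂, hE₂ b lam hbLam hO2lam hbO₂, hwa, hwb,
            add_zero] at E2
          have hm2 : m2 = ℓpp := ht₂inj m2 ℓpp hO2m2 hO2ℓpp
            (fun h => ha.1 (h ▸ ham2)) (fun h => ha.2.2 (h ▸ ham2)) hℓpps₁ hℓpps₃
            (by rw [ht₂ℓpp]; linear_combination E2)
          have haxpp : a = xpp := point_unique hℓQ₁ℓpp haℓQ₁ (hm2 ▸ ham2) hxpp.1 hxpp.2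
          have haℓ₃xpp : a ∈ ℓ₃xpp := by rw [haxpp]; exact hxppℓ₃xpp
          have haO₃'' : a ≠ O₃ := by rw [haxpp]; exact hxppO₃
          rw [hE₃ a ℓ₃xpp haℓ₃xpp hO3ℓ₃xpp haO₃'', hE₃ b s₂ hb.2.1 hO3s₂ hbO₃, ht₃s₂,
            if_neg haLam, if_pos hbLam, hwa, hwb, add_zero, add_zero, zero_add] at E3
          exact hδxpp (by linear_combination -E3)
        · -- a = Q and coordinate 2 is impossible
          obtain ⟨m3, ham3, hO3m3⟩ := hline a O₃ haO₃
          rw [hE₃ a m3 ham3 hO3m3 haO₃, hE₃ b s₂ hb.2.1 hO3s₂ hbO₃, ht₃s₂,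
            if_neg haLam, if_neg hbLam, hwa, hwb, add_zero, add_zero, add_zero,
            zero_add] at E3
          have hm3 : m3 = ℓQ₃ := ht₃inj m3 ℓQ₃ hO3m3 hO3ℓQ₃
            (fun h => ha.1 (h ▸ ham3)) (fun h => ha.2.1 (h ▸ ham3)) hℓQ₃s₁ hℓQ₃s₂
            (E3.trans ht₃Q.symm)
          have hℓQ₁ℓQ₃ : ℓQ₁ ≠ ℓQ₃ := by
            intro h
            exact hQs₂ ((huniq₂ ℓQ₁ hO1ℓQ₁ (h ▸ hO3ℓQ₃)) ▸ hQℓQ₁)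
          have haQ : a = Q := point_unique hℓQ₁ℓQ₃ haℓQ₁ (hm3 ▸ ham3) hQℓQ₁ hQℓQ₃
          subst haQ
          obtain ⟨m2', hbm2, hO2m2'⟩ := hline b O₂ hbO₂
          rw [hE₂ a ℓQ₂ hQℓQ₂ hO2ℓQ₂ hQO₂, hE₂ b m2' hbm2 hO2m2' hbO₂, ht₂Q, hwa, hwb,
            add_zero] at E2
          have : t₂ m2' = 0 := by linear_combination -E2
          exact ht₂ne m2' hO2m2' (fun h => hb.1 (h ▸ hbm2)) (fun h => hb.2.2 (h ▸ hbm2)) this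
    -- CLAIM: off-side point and a point on s₃ only
    have clOffS₃ : ∀ a b : P, (a ∉ s₁ ∧ a ∉ s₂ ∧ a ∉ s₃) →
        (b ∉ s₁ ∧ b ∉ s₂ ∧ b ∈ s₃) →
        cc₁ a = cc₁ b → cc₂ a = cc₂ b → cc₃ a = cc₃ b → False := by
      intro a b ha hb E1 E2 E3
      have haO₁ : a ≠ O₁ := fun e => ha.2.1 (e ▸ hO1s₂)
      have haO₂ : a ≠ O₂ := fun e => ha.1 (e ▸ hO2s₁)
      have haO₃ : a ≠ O₃ := fun e => ha.1 (e ▸ hO3s₁)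
      have hbO₁ : b ≠ O₁ := fun e => hb.2.1 (e ▸ hO1s₂)
      have hbO₂ : b ≠ O₂ := fun e => hb.1 (e ▸ hO2s₁)
      have hbO₃ : b ≠ O₃ := fun e => hb.1 (e ▸ hO3s₁)
      have hwa : wP a = 0 := hwOff a ha.1 ha.2.1 ha.2.2
      have hwb : wP b = -1 := hws₃ b hb.1 hb.2.1 hb.2.2
      obtain ⟨m1, ham1, hO1m1⟩ := hline a O₁ haO₁
      rw [hE₁ a m1 ham1 hO1m1 haO₁, hE₁ b s₃ hb.2.2 hO1s₃ hbO₁, ht₁s₃, hwa, hwb,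
        add_zero, zero_add] at E1
      have hm1 : m1 = ℓQ'₁ := ht₁inj m1 ℓQ'₁ hO1m1 hO1ℓQ'₁
        (fun h => ha.2.1 (h ▸ ham1)) (fun h => ha.2.2 (h ▸ ham1)) hℓQ'₁s₂ hℓQ'₁s₃
        (E1.trans ht₁Q'.symm)
      have haℓQ'₁ : a ∈ ℓQ'₁ := hm1 ▸ ham1
      obtain ⟨m2, ham2, hO2m2⟩ := hline a O₂ haO₂
      rw [hE₂ a m2 ham2 hO2m2 haO₂, hE₂ b s₃ hb.2.2 hO2s₃ hbO₂, ht₂s₃, hwa, hwb,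
        add_zero, zero_add] at E2
      by_cases haLam : a ∈ lam
      · have hm2lam : m2 = lam := line_unique haO₂ ham2 hO2m2 haLam hO2lam
        rw [hm2lam] at E2
        exact hlamℓQ'₂ (ht₂inj lam ℓQ'₂ hO2lam hO2ℓQ'₂ hlams₁ hlams₃ hℓQ'₂s₁ hℓQ'₂s₃
          (E2.trans ht₂Q'.symm))
      · have hm2 : m2 = ℓQ'₂ := ht₂inj m2 ℓQ'₂ hO2m2 hO2ℓQ'₂
          (fun h => ha.1 (h ▸ ham2)) (fun h => ha.2.2 (h ▸ ham2)) hℓQ'₂s₁ hℓQ'₂s₃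
          (E2.trans ht₂Q'.symm)
        have hℓQ'₁ℓQ'₂ : ℓQ'₁ ≠ ℓQ'₂ := by
          intro h
          exact hQ's₃ ((huniq₃ ℓQ'₁ hO1ℓQ'₁ (h ▸ hO2ℓQ'₂)) ▸ hQ'ℓQ'₁)
        have haQ' : a = Q' := point_unique hℓQ'₁ℓQ'₂ haℓQ'₁ (hm2 ▸ ham2) hQ'ℓQ'₁ hQ'ℓQ'₂
        subst haQ'
        have hbLam : b ∉ lam := by
          intro h
          exact hbO₂ (point_unique hlams₃ h hb.2.2 hO2lam hO2s₃)
        obtain ⟨m3', hbm3, hO3m3'⟩ := hline b O₃ hbO₃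
        rw [hE₃ a ℓQ'₃ hQ'ℓQ'₃ hO3ℓQ'₃ hQ'O₃, hE₃ b m3' hbm3 hO3m3' hbO₃, ht₃Q', hwa, hwb,
          if_neg haLam, if_neg hbLam, add_zero, add_zero, add_zero] at E3
        have : t₃ m3' = 0 := by linear_combination -E3
        exact ht₃ne m3' hO3m3' (fun h => hb.1 (h ▸ hbm3)) (fun h => hb.2.1 (h ▸ hbm3)) this
    -- CLAIM: two distinct points on the same side
    have clS₁S₁ : ∀ a b : P, a ≠ b → (a ∈ s₁ ∧ a ∉ s₂ ∧ a ∉ s₃) →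
        (b ∈ s₁ ∧ b ∉ s₂ ∧ b ∉ s₃) → cc₁ a = cc₁ b → False := by
      intro a b hab ha hb E1
      have haO₁ : a ≠ O₁ := fun e => ha.2.1 (e ▸ hO1s₂)
      have hbO₁ : b ≠ O₁ := fun e => hb.2.1 (e ▸ hO1s₂)
      obtain ⟨m1, ham1, hO1m1⟩ := hline a O₁ haO₁
      obtain ⟨m1', hbm1, hO1m1'⟩ := hline b O₁ hbO₁
      rw [hE₁ a m1 ham1 hO1m1 haO₁, hE₁ b m1' hbm1 hO1m1' hbO₁,
        hws₁ a ha.1 ha.2.1 ha.2.2, hws₁ b hb.1 hb.2.1 hb.2.2] at E1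
      have hval : t₁ m1 = t₁ m1' := by linear_combination E1
      have hm : m1 = m1' := ht₁inj m1 m1' hO1m1 hO1m1'
        (fun h => ha.2.1 (h ▸ ham1)) (fun h => ha.2.2 (h ▸ ham1))
        (fun h => hb.2.1 (h ▸ hbm1)) (fun h => hb.2.2 (h ▸ hbm1)) hval
      have : m1 = s₁ := line_unique hab ham1 (hm ▸ hbm1) ha.1 hb.1
      exact hO1s₁ (this ▸ hO1m1)
    have clS₂S₂ : ∀ a b : P, a ≠ b → (a ∉ s₁ ∧ a ∈ s₂ ∧ a ∉ s₃) →
        (b ∉ s₁ ∧ b ∈ s₂ ∧ b ∉ s₃) → cc₂ a = cc₂ b → False := by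
      intro a b hab ha hb E2
      have haO₂ : a ≠ O₂ := fun e => ha.1 (e ▸ hO2s₁)
      have hbO₂ : b ≠ O₂ := fun e => hb.1 (e ▸ hO2s₁)
      obtain ⟨m2, ham2, hO2m2⟩ := hline a O₂ haO₂
      obtain ⟨m2', hbm2, hO2m2'⟩ := hline b O₂ hbO₂
      rw [hE₂ a m2 ham2 hO2m2 haO₂, hE₂ b m2' hbm2 hO2m2' hbO₂,
        hws₂ a ha.1 ha.2.1 ha.2.2, hws₂ b hb.1 hb.2.1 hb.2.2] at E2
      have hval : t₂ m2 = t₂ m2' := by linear_combination E2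
      have hm : m2 = m2' := ht₂inj m2 m2' hO2m2 hO2m2'
        (fun h => ha.1 (h ▸ ham2)) (fun h => ha.2.2 (h ▸ ham2))
        (fun h => hb.1 (h ▸ hbm2)) (fun h => hb.2.2 (h ▸ hbm2)) hval
      have : m2 = s₂ := line_unique hab ham2 (hm ▸ hbm2) ha.2.1 hb.2.1
      exact hO2s₂ (this ▸ hO2m2)
    have clS₃S₃ : ∀ a b : P, a ≠ b → (a ∉ s₁ ∧ a ∉ s₂ ∧ a ∈ s₃) →
        (b ∉ s₁ ∧ b ∉ s₂ ∧ b ∈ s₃) → cc₃ a = cc₃ b → False := by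
      intro a b hab ha hb E3
      have haO₃ : a ≠ O₃ := fun e => ha.1 (e ▸ hO3s₁)
      have hbO₃ : b ≠ O₃ := fun e => hb.1 (e ▸ hO3s₁)
      have haO₂ : a ≠ O₂ := fun e => ha.1 (e ▸ hO2s₁)
      have hbO₂ : b ≠ O₂ := fun e => hb.1 (e ▸ hO2s₁)
      have haLam : a ∉ lam := fun h => haO₂ (point_unique hlams₃ h ha.2.2 hO2lam hO2s₃)
      have hbLam : b ∉ lam := fun h => hbO₂ (point_unique hlams₃ h hb.2.2 hO2lam hO2s₃)
      obtain ⟨m3, ham3, hO3m3⟩ := hline a O₃ haO₃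
      obtain ⟨m3', hbm3, hO3m3'⟩ := hline b O₃ hbO₃
      rw [hE₃ a m3 ham3 hO3m3 haO₃, hE₃ b m3' hbm3 hO3m3' hbO₃,
        hws₃ a ha.1 ha.2.1 ha.2.2, hws₃ b hb.1 hb.2.1 hb.2.2,
        if_neg haLam, if_neg hbLam] at E3
      have hval : t₃ m3 = t₃ m3' := by linear_combination E3
      have hm : m3 = m3' := ht₃inj m3 m3' hO3m3 hO3m3'
        (fun h => ha.1 (h ▸ ham3)) (fun h => ha.2.1 (h ▸ ham3))
        (fun h => hb.1 (h ▸ hbm3)) (fun h => hb.2.1 (h ▸ hbm3)) hval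
      have : m3 = s₃ := line_unique hab ham3 (hm ▸ hbm3) ha.2.2 hb.2.2
      exact hO3s₃ (this ▸ hO3m3)
    -- CLAIM: points on two different sides
    have clS₁S₂ : ∀ a b : P, (a ∈ s₁ ∧ a ∉ s₂ ∧ a ∉ s₃) →
        (b ∉ s₁ ∧ b ∈ s₂ ∧ b ∉ s₃) → cc₁ a = cc₁ b → False := by
      intro a b ha hb E1
      have haO₁ : a ≠ O₁ := fun e => ha.2.1 (e ▸ hO1s₂)
      have hbO₁ : b ≠ O₁ := fun e => hb.2.2 (e ▸ hO1s₃)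
      obtain ⟨m1, ham1, hO1m1⟩ := hline a O₁ haO₁
      rw [hE₁ a m1 ham1 hO1m1 haO₁, hE₁ b s₂ hb.2.1 hO1s₂ hbO₁, ht₁s₂,
        hws₁ a ha.1 ha.2.1 ha.2.2, hws₂ b hb.1 hb.2.1 hb.2.2] at E1
      have : t₁ m1 = 0 := by linear_combination E1
      exact ht₁ne m1 hO1m1 (fun h => ha.2.1 (h ▸ ham1)) (fun h => ha.2.2 (h ▸ ham1)) this
    have clS₁S₃ : ∀ a b : P, (a ∈ s₁ ∧ a ∉ s₂ ∧ a ∉ s₃) →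
        (b ∉ s₁ ∧ b ∉ s₂ ∧ b ∈ s₃) → cc₂ a = cc₂ b → False := by
      intro a b ha hb E2
      have haO₂ : a ≠ O₂ := fun e => ha.2.2 (e ▸ hO2s₃)
      have hbO₂ : b ≠ O₂ := fun e => hb.1 (e ▸ hO2s₁)
      rw [hE₂ a s₁ ha.1 hO2s₁ haO₂, hE₂ b s₃ hb.2.2 hO2s₃ hbO₂, ht₂s₁, ht₂s₃,
        hws₁ a ha.1 ha.2.1 ha.2.2, hws₃ b hb.1 hb.2.1 hb.2.2] at E2
      exact k1m1 (by linear_combination E2)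
    have clS₂S₃ : ∀ a b : P, (a ∉ s₁ ∧ a ∈ s₂ ∧ a ∉ s₃) →
        (b ∉ s₁ ∧ b ∉ s₂ ∧ b ∈ s₃) → cc₁ a = cc₁ b → False := by
      intro a b ha hb E1
      have haO₁ : a ≠ O₁ := fun e => ha.2.2 (e ▸ hO1s₃)
      have hbO₁ : b ≠ O₁ := fun e => hb.2.1 (e ▸ hO1s₂)
      rw [hE₁ a s₂ ha.2.1 hO1s₂ haO₁, hE₁ b s₃ hb.2.2 hO1s₃ hbO₁, ht₁s₂, ht₁s₃,
        hws₂ a ha.1 ha.2.1 ha.2.2, hws₃ b hb.1 hb.2.1 hb.2.2] at E1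
      exact k1m1 (by linear_combination E1)
    -- CLAIMS: vertices against non-vertices
    have clV₁ : ∀ b : P,
        (b ∉ s₁ ∧ b ∉ s₂ ∧ b ∉ s₃) ∨ (b ∈ s₁ ∧ b ∉ s₂ ∧ b ∉ s₃) ∨
        (b ∉ s₁ ∧ b ∈ s₂ ∧ b ∉ s₃) ∨ (b ∉ s₁ ∧ b ∉ s₂ ∧ b ∈ s₃) →
        cc₂ b = 0 → cc₃ b = 0 → False := by
      intro b hb E2 E3
      rcases hb with hb | hb | hb | hb
      · have hbO₂ : b ≠ O₂ := fun e => hb.1 (e ▸ hO2s₁)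
        obtain ⟨m2, hbm2, hO2m2⟩ := hline b O₂ hbO₂
        rw [hE₂ b m2 hbm2 hO2m2 hbO₂, hwOff b hb.1 hb.2.1 hb.2.2, add_zero] at E2
        exact ht₂ne m2 hO2m2 (fun h => hb.1 (h ▸ hbm2)) (fun h => hb.2.2 (h ▸ hbm2)) E2
      · have hbO₂ : b ≠ O₂ := fun e => hb.2.2 (e ▸ hO2s₃)
        rw [hE₂ b s₁ hb.1 hO2s₁ hbO₂, ht₂s₁, hws₁ b hb.1 hb.2.1 hb.2.2, zero_add] at E2
        exact h1 E2
      · have hbO₃ : b ≠ O₃ := fun e => hb.1 (e ▸ hO3s₁)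
        rw [hE₃ b s₂ hb.2.1 hO3s₂ hbO₃, ht₃s₂, hws₂ b hb.1 hb.2.1 hb.2.2, zero_add] at E3
        by_cases hbLam : b ∈ lam
        · rw [if_pos hbLam] at E3
          exact hδm1 (by linear_combination E3)
        · rw [if_neg hbLam, add_zero] at E3
          exact h1 E3
      · have hbO₂ : b ≠ O₂ := fun e => hb.1 (e ▸ hO2s₁)
        rw [hE₂ b s₃ hb.2.2 hO2s₃ hbO₂, ht₂s₃, hws₃ b hb.1 hb.2.1 hb.2.2, zero_add] at E2
        exact km10 E2
    have clV₂ : ∀ b : P,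
        (b ∉ s₁ ∧ b ∉ s₂ ∧ b ∉ s₃) ∨ (b ∈ s₁ ∧ b ∉ s₂ ∧ b ∉ s₃) ∨
        (b ∉ s₁ ∧ b ∈ s₂ ∧ b ∉ s₃) ∨ (b ∉ s₁ ∧ b ∉ s₂ ∧ b ∈ s₃) →
        cc₁ b = 0 → cc₂ b = S → False := by
      intro b hb E1 E2
      rcases hb with hb | hb | hb | hb
      · have hbO₁ : b ≠ O₁ := fun e => hb.2.1 (e ▸ hO1s₂)
        obtain ⟨m1, hbm1, hO1m1⟩ := hline b O₁ hbO₁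
        rw [hE₁ b m1 hbm1 hO1m1 hbO₁, hwOff b hb.1 hb.2.1 hb.2.2, add_zero] at E1
        exact ht₁ne m1 hO1m1 (fun h => hb.2.1 (h ▸ hbm1)) (fun h => hb.2.2 (h ▸ hbm1)) E1
      · have hbO₂ : b ≠ O₂ := fun e => hb.2.2 (e ▸ hO2s₃)
        rw [hE₂ b s₁ hb.1 hO2s₁ hbO₂, ht₂s₁, hws₁ b hb.1 hb.2.1 hb.2.2, zero_add] at E2
        exact hS1 E2.symm
      · have hbO₁ : b ≠ O₁ := fun e => hb.2.2 (e ▸ hO1s₃)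
        rw [hE₁ b s₂ hb.2.1 hO1s₂ hbO₁, ht₁s₂, hws₂ b hb.1 hb.2.1 hb.2.2, zero_add] at E1
        exact h1 E1
      · have hbO₁ : b ≠ O₁ := fun e => hb.2.1 (e ▸ hO1s₂)
        rw [hE₁ b s₃ hb.2.2 hO1s₃ hbO₁, ht₁s₃, hws₃ b hb.1 hb.2.1 hb.2.2, zero_add] at E1
        exact km10 E1
    have clV₃ : ∀ b : P,
        (b ∉ s₁ ∧ b ∉ s₂ ∧ b ∉ s₃) ∨ (b ∈ s₁ ∧ b ∉ s₂ ∧ b ∉ s₃) ∨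
        (b ∉ s₁ ∧ b ∈ s₂ ∧ b ∉ s₃) ∨ (b ∉ s₁ ∧ b ∉ s₂ ∧ b ∈ s₃) →
        cc₁ b = 2 → cc₂ b = 2 → cc₃ b = S + 2 → False := by
      intro b hb E1 E2 E3
      rcases hb with hb | hb | hb | hb
      · have hbO₁ : b ≠ O₁ := fun e => hb.2.1 (e ▸ hO1s₂)
        have hbO₂ : b ≠ O₂ := fun e => hb.1 (e ▸ hO2s₁)
        have hbO₃ : b ≠ O₃ := fun e => hb.1 (e ▸ hO3s₁)
        have hwb : wP b = 0 := hwOff b hb.1 hb.2.1 hb.2.2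
        obtain ⟨m1, hbm1, hO1m1⟩ := hline b O₁ hbO₁
        rw [hE₁ b m1 hbm1 hO1m1 hbO₁, hwb, add_zero] at E1
        have hm1 : m1 = F₁ := ht₁inj m1 F₁ hO1m1 hO1F₁
          (fun h => hb.2.1 (h ▸ hbm1)) (fun h => hb.2.2 (h ▸ hbm1)) hF₁s₂ hF₁s₃
          (E1.trans ht₁F.symm)
        obtain ⟨m2, hbm2, hO2m2⟩ := hline b O₂ hbO₂
        rw [hE₂ b m2 hbm2 hO2m2 hbO₂, hwb, add_zero] at E2
        have hm2 : m2 = F₂ := ht₂inj m2 F₂ hO2m2 hO2F₂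
          (fun h => hb.1 (h ▸ hbm2)) (fun h => hb.2.2 (h ▸ hbm2)) hF₂s₁ hF₂s₃
          (E2.trans ht₂F.symm)
        have hbLam : b ∉ lam := by
          intro h
          exact hlamF₂ (line_unique hbO₂ h hO2lam hbm2 hO2m2 ▸ hm2)
        obtain ⟨m3, hbm3, hO3m3⟩ := hline b O₃ hbO₃
        rw [hE₃ b m3 hbm3 hO3m3 hbO₃, hwb, if_neg hbLam, add_zero, add_zero] at E3
        have hm3 : m3 = F₃ := ht₃inj m3 F₃ hO3m3 hO3F₃
          (fun h => hb.1 (h ▸ hbm3)) (fun h => hb.2.1 (h ▸ hbm3)) hF₃s₁ hF₃s₂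
          (E3.trans ht₃F₃.symm)
        exact hFnc b (hm1 ▸ hbm1) (hm2 ▸ hbm2) (hm3 ▸ hbm3)
      · have hbO₂ : b ≠ O₂ := fun e => hb.2.2 (e ▸ hO2s₃)
        rw [hE₂ b s₁ hb.1 hO2s₁ hbO₂, ht₂s₁, hws₁ b hb.1 hb.2.1 hb.2.2, zero_add] at E2
        exact k12 E2
      · have hbO₁ : b ≠ O₁ := fun e => hb.2.2 (e ▸ hO1s₃)
        rw [hE₁ b s₂ hb.2.1 hO1s₂ hbO₁, ht₁s₂, hws₂ b hb.1 hb.2.1 hb.2.2, zero_add] at E1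
        exact k12 E1
      · have hbO₁ : b ≠ O₁ := fun e => hb.2.1 (e ▸ hO1s₂)
        rw [hE₁ b s₃ hb.2.2 hO1s₃ hbO₁, ht₁s₃, hws₃ b hb.1 hb.2.1 hb.2.2, zero_add] at E1
        exact k2m1 E1.symm
    -- dispatcher
    rcases hclass x with hx | hx | hx | hx | hx | hx | hx
    · subst hx
      rcases hclass y with hy | hy | hy | hy | hy | hy | hy
      · exact hxyeq hy.symm
      · subst hy
        rw [hvO₁.2.2, hvO₂.2.2] at e₃
        exact hδ0 e₃.symm
      · subst hy
        rw [hvO₁.2.1, hvO₃.2.1] at e₂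
        exact h2 e₂.symm
      · exact clV₁ y (Or.inl hy) (by rw [← e₂]; exact hvO₁.2.1) (by rw [← e₃]; exact hvO₁.2.2)
      · exact clV₁ y (Or.inr (Or.inl hy)) (by rw [← e₂]; exact hvO₁.2.1)
          (by rw [← e₃]; exact hvO₁.2.2)
      · exact clV₁ y (Or.inr (Or.inr (Or.inl hy))) (by rw [← e₂]; exact hvO₁.2.1)
          (by rw [← e₃]; exact hvO₁.2.2)
      · exact clV₁ y (Or.inr (Or.inr (Or.inr hy))) (by rw [← e₂]; exact hvO₁.2.1)
          (by rw [← e₃]; exact hvO₁.2.2)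
    · subst hx
      rcases hclass y with hy | hy | hy | hy | hy | hy | hy
      · subst hy
        rw [hvO₂.2.2, hvO₁.2.2] at e₃
        exact hδ0 e₃
      · exact hxyeq hy.symm
      · subst hy
        rw [hvO₂.1, hvO₃.1] at e₁
        exact h2 e₁.symm
      · exact clV₂ y (Or.inl hy) (by rw [← e₁]; exact hvO₂.1) (by rw [← e₂]; exact hvO₂.2.1)
      · exact clV₂ y (Or.inr (Or.inl hy)) (by rw [← e₁]; exact hvO₂.1)
          (by rw [← e₂]; exact hvO₂.2.1)
      · exact clV₂ y (Or.inr (Or.inr (Or.inl hy))) (by rw [← e₁]; exact hvO₂.1)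
          (by rw [← e₂]; exact hvO₂.2.1)
      · exact clV₂ y (Or.inr (Or.inr (Or.inr hy))) (by rw [← e₁]; exact hvO₂.1)
          (by rw [← e₂]; exact hvO₂.2.1)
    · subst hx
      rcases hclass y with hy | hy | hy | hy | hy | hy | hy
      · subst hy
        rw [hvO₃.2.1, hvO₁.2.1] at e₂
        exact h2 e₂
      · subst hy
        rw [hvO₃.1, hvO₂.1] at e₁
        exact h2 e₁
      · exact hxyeq hy.symm
      · exact clV₃ y (Or.inl hy) (by rw [← e₁]; exact hvO₃.1)
          (by rw [← e₂]; exact hvO₃.2.1) (by rw [← e₃]; exact hvO₃.2.2)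
      · exact clV₃ y (Or.inr (Or.inl hy)) (by rw [← e₁]; exact hvO₃.1)
          (by rw [← e₂]; exact hvO₃.2.1) (by rw [← e₃]; exact hvO₃.2.2)
      · exact clV₃ y (Or.inr (Or.inr (Or.inl hy))) (by rw [← e₁]; exact hvO₃.1)
          (by rw [← e₂]; exact hvO₃.2.1) (by rw [← e₃]; exact hvO₃.2.2)
      · exact clV₃ y (Or.inr (Or.inr (Or.inr hy))) (by rw [← e₁]; exact hvO₃.1)
          (by rw [← e₂]; exact hvO₃.2.1) (by rw [← e₃]; exact hvO₃.2.2)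
    · rcases hclass y with hy | hy | hy | hy | hy | hy | hy
      · subst hy
        exact clV₁ x (Or.inl hx) (by rw [e₂]; exact hvO₁.2.1) (by rw [e₃]; exact hvO₁.2.2)
      · subst hy
        exact clV₂ x (Or.inl hx) (by rw [e₁]; exact hvO₂.1) (by rw [e₂]; exact hvO₂.2.1)
      · subst hy
        exact clV₃ x (Or.inl hx) (by rw [e₁]; exact hvO₃.1) (by rw [e₂]; exact hvO₃.2.1)
          (by rw [e₃]; exact hvO₃.2.2)
      · exact clOffOff x y hxyeq hx hy e₁ e₂
      · exact clOffS₁ x y hx hy e₁ e₂ e₃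
      · exact clOffS₂ x y hx hy e₁ e₂ e₃
      · exact clOffS₃ x y hx hy e₁ e₂ e₃
    · rcases hclass y with hy | hy | hy | hy | hy | hy | hy
      · subst hy
        exact clV₁ x (Or.inr (Or.inl hx)) (by rw [e₂]; exact hvO₁.2.1)
          (by rw [e₃]; exact hvO₁.2.2)
      · subst hy
        exact clV₂ x (Or.inr (Or.inl hx)) (by rw [e₁]; exact hvO₂.1)
          (by rw [e₂]; exact hvO₂.2.1)
      · subst hy
        exact clV₃ x (Or.inr (Or.inl hx)) (by rw [e₁]; exact hvO₃.1)
          (by rw [e₂]; exact hvO₃.2.1) (by rw [e₃]; exact hvO₃.2.2)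
      · exact clOffS₁ y x hy hx e₁.symm e₂.symm e₃.symm
      · exact clS₁S₁ x y hxyeq hx hy e₁
      · exact clS₁S₂ x y hx hy e₁
      · exact clS₁S₃ x y hx hy e₂
    · rcases hclass y with hy | hy | hy | hy | hy | hy | hy
      · subst hy
        exact clV₁ x (Or.inr (Or.inr (Or.inl hx))) (by rw [e₂]; exact hvO₁.2.1)
          (by rw [e₃]; exact hvO₁.2.2)
      · subst hy
        exact clV₂ x (Or.inr (Or.inr (Or.inl hx))) (by rw [e₁]; exact hvO₂.1)
          (by rw [e₂]; exact hvO₂.2.1)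
      · subst hy
        exact clV₃ x (Or.inr (Or.inr (Or.inl hx))) (by rw [e₁]; exact hvO₃.1)
          (by rw [e₂]; exact hvO₃.2.1) (by rw [e₃]; exact hvO₃.2.2)
      · exact clOffS₂ y x hy hx e₁.symm e₂.symm e₃.symm
      · exact clS₁S₂ y x hy hx e₁.symm
      · exact clS₂S₂ x y hxyeq hx hy e₂
      · exact clS₂S₃ x y hx hy e₁
    · rcases hclass y with hy | hy | hy | hy | hy | hy | hy
      · subst hy
        exact clV₁ x (Or.inr (Or.inr (Or.inr hx))) (by rw [e₂]; exact hvO₁.2.1)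
          (by rw [e₃]; exact hvO₁.2.2)
      · subst hy
        exact clV₂ x (Or.inr (Or.inr (Or.inr hx))) (by rw [e₁]; exact hvO₂.1)
          (by rw [e₂]; exact hvO₂.2.1)
      · subst hy
        exact clV₃ x (Or.inr (Or.inr (Or.inr hx))) (by rw [e₁]; exact hvO₃.1)
          (by rw [e₂]; exact hvO₃.2.1) (by rw [e₃]; exact hvO₃.2.2)
      · exact clOffS₃ y x hy hx e₁.symm e₂.symm e₃.symm
      · exact clS₁S₃ y x hy hx e₂.symm
      · exact clS₂S₃ y x hy hx e₁.symm
      · exact clS₃S₃ x y hxyeq hx hy e₃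

  · -- line invariance
    have hsmul : ∀ g : ZMod n, (ProjectivePlane.order P L) • g = 0 := by
      intro g
      rw [hn, nsmul_eq_mul, ZMod.natCast_self, zero_mul]
    have hvsum : ∀ m : L, lineSum v m = ![∑ l : L, T₁ l, ∑ l : L, T₂ l, ∑ l : L, T₃ l] := by
      intro m
      have hL1 : lineSum cc₁ m = ∑ l : L, T₁ l := by
        have := lineSum_pencil (P := P) T₁ hsmul m
        rw [hcc₁def]
        simpa using this
      have hL2 : lineSum cc₂ m = ∑ l : L, T₂ l := by
        have := lineSum_pencil (P := P) T₂ hsmul m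
        rw [hcc₂def]
        simpa using this
      have hL3 : lineSum cc₃ m = ∑ l : L, T₃ l := by
        have := lineSum_pencil (P := P) T₃ hsmul m
        rw [hcc₃def]
        simpa using this
      rw [lineSum_eq_sum]
      rw [lineSum_eq_sum] at hL1 hL2 hL3
      have hsplit : (∑ x ∈ pts (P := P) m, v x)
          = (fun k : Fin 3 => ∑ x ∈ pts (P := P) m, (![cc₁ x, cc₂ x, cc₃ x] : Fin 3 → ZMod n) k) := by
        funext k
        rw [Finset.sum_apply]
      rw [hsplit]
      funext k
      fin_cases k
      · simpa using hL1
      · simpa using hL2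
      · simpa using hL3
    intro l l'
    rw [hvsum l, hvsum l']
end
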